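/- arXiv:2508.12747 — 3 statements merged into one kernel-verified Lean document; each statement's English description precedes it below -/
import Mathlib

section
/- The graph G admits a planar storyplan. -/
/-- The topological drawing of the subgraph of `G` induced by the visible vertex
set `S`, with vertex placement `D` and edge curves `γ`, is planar. -/
def IsPlanarTopoFrame {V : Type*} (G : SimpleGraph V) (S : Set V)
    (D : V → ℝ × ℝ) (γ : ∀ u v, G.Adj u v → Path (D u) (D v)) : Prop :=
  Set.InjOn D S ∧
  (∀ u v (h : G.Adj u v) w, u ∈ S → v ∈ S → w ∈ S →
      D w ∈ Set.range ⇑(γ u v h) → w = u ∨ w = v) ∧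
  (∀ u v x y (h₁ : G.Adj u v) (h₂ : G.Adj x y), u ∈ S → v ∈ S → x ∈ S → y ∈ S →
      ¬((u = x ∧ v = y) ∨ (u = y ∧ v = x)) →
      ∀ p ∈ Set.range ⇑(γ u v h₁) ∩ Set.range ⇑(γ x y h₂),
        ∃ z, (z = u ∨ z = v) ∧ (z = x ∨ z = y) ∧ p = D z)

/-- `G` admits a planar (topological) storyplan: there are `len ≥ 1` time steps,
each vertex `v` is visible on a nonempty interval `[s v, e v] ⊆ [1, len]`,
every vertex gets a point `D v ∈ ℝ²` and every edge `uv` gets a simple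
(injective) curve from `D u` to `D v` (one curve per edge, independent of
orientation), the endpoints of every edge co-occur, and every frame is a
planar topological drawing. -/
def HasPlanarStoryplan {V : Type*} (G : SimpleGraph V) : Prop :=
  ∃ (len : ℕ) (s e : V → ℕ) (D : V → ℝ × ℝ)
      (γ : ∀ u v, G.Adj u v → Path (D u) (D v)),
    1 ≤ len ∧
    (∀ v, 1 ≤ s v ∧ s v ≤ e v ∧ e v ≤ len) ∧
    (∀ u v (h : G.Adj u v), γ v u h.symm = (γ u v h).symm) ∧
    (∀ u v (h : G.Adj u v), Function.Injective ⇑(γ u v h)) ∧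
    (∀ u v, G.Adj u v → ∃ t, s u ≤ t ∧ t ≤ e u ∧ s v ≤ t ∧ t ≤ e v) ∧
    (∀ t, 1 ≤ t → t ≤ len → IsPlanarTopoFrame G {v | s v ≤ t ∧ t ≤ e v} D γ)

/-- The 28 vertices of the graph `G`: cycle vertices `a i`, `b i`, `c i`
(`i ∈ Fin 4`), apex vertices `q i j` and edge vertices `r i j`
(`i ∈ Fin 4`, `j ∈ Fin 2`). -/
inductive GVert : Type
  | a : Fin 4 → GVert
  | b : Fin 4 → GVert
  | c : Fin 4 → GVert
  | q : Fin 4 → Fin 2 → GVert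
  | r : Fin 4 → Fin 2 → GVert
  deriving DecidableEq

/-- Base relation generating the edges of `G`: the three 4-cycles
`A`, `B`, `C`; each apex vertex `q i j` adjacent to all twelve cycle vertices;
each edge vertex `r i j` adjacent to `q i j` and to the six cycle vertices
`a i, a (i+1), b i, b (i+1), c i, c (i+1)`. -/
def GRel : GVert → GVert → Prop
  | .a i, .a k => k = i + 1
  | .b i, .b k => k = i + 1
  | .c i, .c k => k = i + 1
  | .q _ _, .a _ => True
  | .q _ _, .b _ => True
  | .q _ _, .c _ => True
  | .r i j, .q i' j' => i' = i ∧ j' = j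
  | .r i _, .a k => k = i ∨ k = i + 1
  | .r i _, .b k => k = i ∨ k = i + 1
  | .r i _, .c k => k = i ∨ k = i + 1
  | _, _ => False

/-- The graph `G` from the paper (28 vertices). -/
def GraphG : SimpleGraph GVert := SimpleGraph.fromRel GRel



namespace SPAux

set_option maxRecDepth 8000


/-- integer 2D orientation determinant -/
def det3 (P Q R : ℤ × ℤ) : ℤ := (Q.1 - P.1) * (R.2 - P.2) - (Q.2 - P.2) * (R.1 - P.1)

/-- strict separation of two segments by one of their supporting lines -/
def SepZ (A B C D : ℤ × ℤ) : Prop :=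
  (0 < det3 A B C ∧ 0 < det3 A B D) ∨ (det3 A B C < 0 ∧ det3 A B D < 0) ∨
  (0 < det3 C D A ∧ 0 < det3 C D B) ∨ (det3 C D A < 0 ∧ det3 C D B < 0)

def pt (P : ℤ × ℤ) : ℝ × ℝ := ((P.1 : ℝ), (P.2 : ℝ))

lemma pt_inj {P Q : ℤ × ℤ} (h : pt P = pt Q) : P = Q := by
  rcases P with ⟨p1, p2⟩; rcases Q with ⟨q1, q2⟩
  simp only [pt, Prod.mk.injEq] at h ⊢
  exact ⟨by exact_mod_cast h.1, by exact_mod_cast h.2⟩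

noncomputable def detR (P Q R : ℝ × ℝ) : ℝ :=
  (Q.1 - P.1) * (R.2 - P.2) - (Q.2 - P.2) * (R.1 - P.1)

lemma detR_pt (A B C : ℤ × ℤ) : detR (pt A) (pt B) (pt C) = (det3 A B C : ℝ) := by
  simp only [detR, det3, pt]; push_cast; ring

lemma detR_swap (P Q X : ℝ × ℝ) : detR Q P X = - detR P Q X := by
  simp only [detR]; ring

lemma detR_swap23 (Z A B : ℝ × ℝ) : detR Z B A = - detR Z A B := by
  simp only [detR]; ring

/-- parametrized segment -/
def sg (P Q : ℝ × ℝ) (t : ℝ) : ℝ × ℝ := (P.1 + t * (Q.1 - P.1), P.2 + t * (Q.2 - P.2))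

lemma sg_flip (P Q : ℝ × ℝ) (t : ℝ) : sg P Q t = sg Q P (1 - t) := by
  simp only [sg, Prod.mk.injEq]; constructor <;> ring

lemma detR_sg (P Q : ℝ × ℝ) (t : ℝ) : detR P Q (sg P Q t) = 0 := by
  simp only [detR, sg]; ring

lemma detR_sg_affine (P Q A B : ℝ × ℝ) (t : ℝ) :
    detR P Q (sg A B t) = (1 - t) * detR P Q A + t * detR P Q B := by
  simp only [detR, sg]; ring

lemma off_seg {P Q X : ℝ × ℝ} (hd : detR P Q X ≠ 0) {t : ℝ} (h : sg P Q t = X) : False :=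
  hd (by rw [← h]; exact detR_sg P Q t)

lemma sep_core {P Q A B : ℝ × ℝ} (hA : 0 < detR P Q A) (hB : 0 < detR P Q B) {s t : ℝ}
    (ht0 : 0 ≤ t) (ht1 : t ≤ 1) (h : sg P Q s = sg A B t) : False := by
  have h1 : detR P Q (sg A B t) = 0 := by rw [← h]; exact detR_sg P Q s
  rw [detR_sg_affine] at h1
  have h2 : 0 < (1 - t) * detR P Q A + t * detR P Q B := by
    rcases eq_or_lt_of_le ht0 with h' | h'
    · rw [← h']; simpa using hA
    · have hx : 0 < t * detR P Q B := mul_pos h' hB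
      have hy : 0 ≤ (1 - t) * detR P Q A := mul_nonneg (by linarith) hA.le
      linarith
  linarith

lemma sep_none {A B C D : ℤ × ℤ} (h : SepZ A B C D) {s t : ℝ}
    (hs0 : 0 ≤ s) (hs1 : s ≤ 1) (ht0 : 0 ≤ t) (ht1 : t ≤ 1)
    (heq : sg (pt A) (pt B) s = sg (pt C) (pt D) t) : False := by
  have cast_pos : ∀ X Y Z' : ℤ × ℤ, 0 < det3 X Y Z' → 0 < detR (pt X) (pt Y) (pt Z') := by
    intro X Y Z' hp; rw [detR_pt]; exact_mod_cast hp
  have cast_neg : ∀ X Y Z' : ℤ × ℤ, det3 X Y Z' < 0 → 0 < detR (pt Y) (pt X) (pt Z') := by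
    intro X Y Z' hp; rw [detR_swap, detR_pt, neg_pos]; exact_mod_cast hp
  rcases h with ⟨h1, h2⟩ | ⟨h1, h2⟩ | ⟨h1, h2⟩ | ⟨h1, h2⟩
  · exact sep_core (cast_pos _ _ _ h1) (cast_pos _ _ _ h2) ht0 ht1 heq
  · exact sep_core (cast_neg _ _ _ h1) (cast_neg _ _ _ h2) ht0 ht1
      (by rw [← sg_flip]; exact heq)
  · exact sep_core (cast_pos _ _ _ h1) (cast_pos _ _ _ h2) hs0 hs1 heq.symm
  · exact sep_core (cast_neg _ _ _ h1) (cast_neg _ _ _ h2) hs0 hs1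
      (by rw [← sg_flip]; exact heq.symm)

lemma sg_eq_base {Z N : ℝ × ℝ} (hZN : Z ≠ N) {t : ℝ} (h : sg Z N t = Z) : t = 0 := by
  rcases Z with ⟨z1, z2⟩; rcases N with ⟨n1, n2⟩
  simp only [sg, Prod.mk.injEq] at h
  have h1 : t * (n1 - z1) = 0 := by linarith [h.1]
  have h2 : t * (n2 - z2) = 0 := by linarith [h.2]
  rcases mul_eq_zero.mp h1 with h | h
  · exact h
  rcases mul_eq_zero.mp h2 with h' | h'
  · exact h'
  exact absurd (by simp only [Prod.mk.injEq]; constructor <;> linarith) hZN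

lemma shared_core {Z N1 N2 : ℝ × ℝ} (hd : detR Z N1 N2 ≠ 0) {s t : ℝ}
    (h : sg Z N1 s = sg Z N2 t) : sg Z N1 s = Z := by
  have hc1 := congrArg Prod.fst h
  have hc2 := congrArg Prod.snd h
  simp only [sg] at hc1 hc2
  have key : s * detR Z N1 N2 = 0 := by
    simp only [detR]
    linear_combination (N2.2 - Z.2) * hc1 - (N2.1 - Z.1) * hc2
  rcases mul_eq_zero.mp key with hs | hs
  · rw [hs]; simp [sg]
  · exact absurd hs hd


/-- straight segment as a `Path` -/
def segPath (P Q : ℝ × ℝ) : Path P Q where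
  toFun t := sg P Q t.1
  continuous_toFun := by
    apply Continuous.prodMk <;> fun_prop
  source' := by simp [sg]
  target' := by
    show sg P Q ((1 : unitInterval) : ℝ) = Q
    rw [show ((1 : unitInterval) : ℝ) = 1 from rfl]
    exact Prod.ext (by show P.1 + 1 * (Q.1 - P.1) = Q.1; ring)
      (by show P.2 + 1 * (Q.2 - P.2) = Q.2; ring)

@[simp] lemma segPath_apply (P Q : ℝ × ℝ) (t : unitInterval) :
    segPath P Q t = sg P Q t.1 := rfl

/-- two-segment polyline as a `Path` -/
noncomputable def plPath (P M Q : ℝ × ℝ) : Path P Q := (segPath P M).trans (segPath M Q)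

/-- membership in the two pieces of a polyline -/
def OnSeg (A B : ℤ × ℤ) (p : ℝ × ℝ) : Prop :=
  ∃ t : ℝ, 0 ≤ t ∧ t ≤ 1 ∧ sg (pt A) (pt B) t = p

def OnPl (A M B : ℤ × ℤ) (p : ℝ × ℝ) : Prop := OnSeg A M p ∨ OnSeg M B p

lemma OnPl_flip {A M B : ℤ × ℤ} {p : ℝ × ℝ} (h : OnPl A M B p) : OnPl B M A p := by
  rcases h with ⟨t, h0, h1, he⟩ | ⟨t, h0, h1, he⟩
  · exact Or.inr ⟨1 - t, by linarith, by linarith, by rw [← sg_flip]; exact he⟩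
  · exact Or.inl ⟨1 - t, by linarith, by linarith, by rw [← sg_flip]; exact he⟩

lemma mem_range_plPath {A M B : ℤ × ℤ} {p : ℝ × ℝ}
    (hp : p ∈ Set.range ⇑(plPath (pt A) (pt M) (pt B))) : OnPl A M B p := by
  obtain ⟨u, hu⟩ := hp
  rw [plPath, Path.trans_apply] at hu
  split_ifs at hu with h
  · exact Or.inl ⟨2 * u.1, by linarith [u.2.1], by linarith, by simpa using hu⟩
  · exact Or.inr ⟨2 * u.1 - 1, by push_neg at h; linarith, by linarith [u.2.2],
      by simpa using hu⟩

lemma plPath_injective {P M Q : ℝ × ℝ} (hd : detR P M Q ≠ 0) :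
    Function.Injective ⇑(plPath P M Q) := by
  have hPM : P ≠ M := by
    rintro rfl; exact hd (by simp only [detR]; ring)
  have hMQ : M ≠ Q := by
    rintro rfl; exact hd (by simp only [detR]; ring)
  have hMP : M ≠ P := fun h => hPM h.symm
  have sg_inj : ∀ (X Y : ℝ × ℝ), X ≠ Y → ∀ {a b : ℝ}, sg X Y a = sg X Y b → a = b := by
    intro X Y hXY a b hab
    have h1 := congrArg Prod.fst hab
    have h2 := congrArg Prod.snd hab
    simp only [sg] at h1 h2
    have h1' : (a - b) * (Y.1 - X.1) = 0 := by linarith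
    have h2' : (a - b) * (Y.2 - X.2) = 0 := by linarith
    rcases mul_eq_zero.mp h1' with h | h
    · linarith
    rcases mul_eq_zero.mp h2' with h' | h'
    · linarith
    exact absurd (Prod.ext (by linarith) (by linarith)).symm hXY
  have hdMPQ : detR M P Q ≠ 0 := by rw [detR_swap]; simpa using hd
  intro t1 t2 h
  rw [plPath, Path.trans_apply, Path.trans_apply] at h
  split_ifs at h with h1 h2 h2
  · simp only [segPath_apply] at h
    have := sg_inj P M hPM h
    exact Subtype.ext (by linarith)
  · -- t1 first half, t2 second half
    simp only [segPath_apply] at h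
    rw [sg_flip] at h
    have hM := shared_core hdMPQ h
    have e1 : (1 : ℝ) - 2 * t1.1 = 0 := sg_eq_base hMP hM
    have e2 : (2 : ℝ) * t2.1 - 1 = 0 := sg_eq_base hMQ (by rw [← h]; exact hM)
    push_neg at h2
    exact absurd e2 (by nlinarith)
  · simp only [segPath_apply] at h
    rw [sg_flip P M] at h
    have hdMQP : detR M Q P ≠ 0 := by rw [detR_swap23]; simpa using hdMPQ
    have hM := shared_core hdMQP h
    have e1 : (2 : ℝ) * t1.1 - 1 = 0 := sg_eq_base hMQ hM
    push_neg at h1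
    exact absurd e1 (by nlinarith)
  · simp only [segPath_apply] at h
    have := sg_inj M Q hMQ h
    exact Subtype.ext (by linarith)

lemma segPath_symm (P Q : ℝ × ℝ) : (segPath P Q).symm = segPath Q P := by
  have h : ∀ t : unitInterval, (segPath P Q).symm t = segPath Q P t := by
    intro t
    show sg P Q ((unitInterval.symm t : unitInterval) : ℝ) = sg Q P t.1
    rw [unitInterval.coe_symm_eq, sg_flip]
    norm_num
  exact DFunLike.ext _ _ h

lemma plPath_symm (P M Q : ℝ × ℝ) : (plPath P M Q).symm = plPath Q M P := by
  rw [plPath, Path.trans_symm, segPath_symm, segPath_symm]; rfl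


instance instDecGRel : DecidableRel GRel := fun u v => by
  cases u <;> cases v <;> dsimp only [GRel] <;> infer_instance

instance instDecAdj : DecidableRel GraphG.Adj := fun u v =>
  decidable_of_iff (u ≠ v ∧ (GRel u v ∨ GRel v u)) (SimpleGraph.fromRel_adj GRel u v).symm

instance : Fintype GVert :=
  Fintype.ofList
    ((List.finRange 4).map GVert.a ++ (List.finRange 4).map GVert.b ++
      (List.finRange 4).map GVert.c ++
      ((List.finRange 4).flatMap fun i => (List.finRange 2).map fun j => GVert.q i j) ++
      ((List.finRange 4).flatMap fun i => (List.finRange 2).map fun j => GVert.r i j))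
    (by intro x; cases x <;> simp [List.mem_finRange])

def Av : Fin 4 → ℤ × ℤ := ![(-40000, 20000), (-80000, -60000), (100000, -80000), (60000, 60000)]
def Bv : Fin 4 → ℤ × ℤ := ![(560000, 620000), (520000, 540000), (700000, 520000), (660000, 660000)]
def Cv : Fin 4 → ℤ × ℤ :=
  ![(1160000, 1220000), (1120000, 1140000), (1300000, 1120000), (1260000, 1260000)]
def Qv : Fin 4 → ℤ × ℤ :=
  ![(14000000, 7600000), (2400000, 10000000), (-8000000, -2000000), (-9000000, -16000000)]
def Rv : Fin 4 → ℤ × ℤ :=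
  ![(-8000000, 1200000), (1800000, -8000000), (8000000, -1000000), (-1000000, 10000000)]

def Zf : GVert → ℤ × ℤ
  | .a i => Av i
  | .b i => Bv i
  | .c i => Cv i
  | .q i _ => Qv i
  | .r i _ => Rv i

def enc : GVert → ℕ
  | .a i => i.val
  | .b i => 4 + i.val
  | .c i => 8 + i.val
  | .q i j => 12 + i.val + 4 * j.val
  | .r i j => 20 + i.val + 4 * j.val

def bendF (P Q : ℤ × ℤ) : ℤ × ℤ :=
  ((P.1 + Q.1) / 2 + (Q.2 - P.2) / 10000, (P.2 + Q.2) / 2 + (P.1 - Q.1) / 10000)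

def W0 (u v : GVert) : ℤ × ℤ :=
  match u, v with
  | .a i, .q k _ =>
      if i = 1 ∧ k = 0 then (200000, -600000)
      else if i = 3 ∧ k = 3 then (280000, 200000)
      else bendF (Zf u) (Zf v)
  | .b i, .q k _ =>
      if i = 1 ∧ k = 0 then (480000, 360000)
      else if i = 3 ∧ k = 3 then (900000, 820000)
      else bendF (Zf u) (Zf v)
  | .c i, .q k _ =>
      if i = 1 ∧ k = 0 then (960000, 880000)
      else if i = 3 ∧ k = 3 then (1480000, 1320000)
      else bendF (Zf u) (Zf v)
  | _, _ => bendF (Zf u) (Zf v)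

def Wf (u v : GVert) : ℤ × ℤ := if enc u ≤ enc v then W0 u v else W0 v u

noncomputable def Df (v : GVert) : ℝ × ℝ := pt (Zf v)

noncomputable def γf : ∀ u v, GraphG.Adj u v → Path (Df u) (Df v) := fun u v _ =>
  plPath (Df u) (pt (Wf u v)) (Df v)

def Shared (Zz N1 E1 N2 E2 : ℤ × ℤ) : Prop :=
  det3 Zz N1 N2 ≠ 0 ∧ SepZ Zz N1 N2 E2 ∧ SepZ N1 E1 Zz N2 ∧ SepZ N1 E1 N2 E2

def AllSep (A1 A2 A3 B1 B2 B3 : ℤ × ℤ) : Prop :=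
  SepZ A1 A2 B1 B2 ∧ SepZ A1 A2 B2 B3 ∧ SepZ A2 A3 B1 B2 ∧ SepZ A2 A3 B2 B3

/-- the per-pair geometric condition, expressed on the cached coordinates of the
two drawn edges (each edge is the polyline `P–W–Q`) -/
def PairCondP (a b : (ℤ × ℤ) × (ℤ × ℤ) × (ℤ × ℤ)) : Prop :=
  (a.1 = b.1 ∧ a.2.2 = b.2.2) ∨
  (a.1 = b.1 ∧ a.2.2 ≠ b.2.2 ∧ Shared a.1 a.2.1 a.2.2 b.2.1 b.2.2) ∨
  (a.1 = b.2.2 ∧ a.2.2 ≠ b.1 ∧ Shared a.1 a.2.1 a.2.2 b.2.1 b.1) ∨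
  (a.2.2 = b.1 ∧ a.1 ≠ b.2.2 ∧ Shared a.2.2 a.2.1 a.1 b.2.1 b.2.2) ∨
  (a.2.2 = b.2.2 ∧ a.1 ≠ b.1 ∧ Shared a.2.2 a.2.1 a.1 b.2.1 b.1) ∨
  (a.1 ≠ b.1 ∧ a.1 ≠ b.2.2 ∧ a.2.2 ≠ b.1 ∧ a.2.2 ≠ b.2.2 ∧
    AllSep a.1 a.2.1 a.2.2 b.1 b.2.1 b.2.2)

/- Bool checkers -/
def sepB (A B C D : ℤ × ℤ) : Bool :=
  (decide (0 < det3 A B C) && decide (0 < det3 A B D)) ||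
  (decide (det3 A B C < 0) && decide (det3 A B D < 0)) ||
  (decide (0 < det3 C D A) && decide (0 < det3 C D B)) ||
  (decide (det3 C D A < 0) && decide (det3 C D B < 0))

def sharedB (Zz N1 E1 N2 E2 : ℤ × ℤ) : Bool :=
  !decide (det3 Zz N1 N2 = 0) && sepB Zz N1 N2 E2 && sepB N1 E1 Zz N2 && sepB N1 E1 N2 E2

def allSepB (A1 A2 A3 B1 B2 B3 : ℤ × ℤ) : Bool :=
  sepB A1 A2 B1 B2 && sepB A1 A2 B2 B3 && sepB A2 A3 B1 B2 && sepB A2 A3 B2 B3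

def pairBP (a b : (ℤ × ℤ) × (ℤ × ℤ) × (ℤ × ℤ)) : Bool :=
  (decide (a.1 = b.1) && decide (a.2.2 = b.2.2)) ||
  (decide (a.1 = b.1) && !decide (a.2.2 = b.2.2) && sharedB a.1 a.2.1 a.2.2 b.2.1 b.2.2) ||
  (decide (a.1 = b.2.2) && !decide (a.2.2 = b.1) && sharedB a.1 a.2.1 a.2.2 b.2.1 b.1) ||
  (decide (a.2.2 = b.1) && !decide (a.1 = b.2.2) && sharedB a.2.2 a.2.1 a.1 b.2.1 b.2.2) ||
  (decide (a.2.2 = b.2.2) && !decide (a.1 = b.1) && sharedB a.2.2 a.2.1 a.1 b.2.1 b.1) ||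
  (!decide (a.1 = b.1) && !decide (a.1 = b.2.2) && !decide (a.2.2 = b.1) &&
    !decide (a.2.2 = b.2.2) && allSepB a.1 a.2.1 a.2.2 b.1 b.2.1 b.2.2)

def chkC4P (L : List ((ℤ × ℤ) × (ℤ × ℤ) × (ℤ × ℤ))) : Bool :=
  L.all fun a => L.all fun b => pairBP a b

def chkC3P (L : List ((ℤ × ℤ) × (ℤ × ℤ) × (ℤ × ℤ))) (Pts : List (ℤ × ℤ)) : Bool :=
  L.all fun d => Pts.all fun z =>
    decide (z = d.1) || decide (z = d.2.2) ||
    (!decide (det3 d.1 d.2.1 z = 0) && !decide (det3 d.2.1 d.2.2 z = 0))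

def chkE (S : List GVert) (E : List (GVert × GVert)) : Bool :=
  S.all fun u => S.all fun v =>
    !decide (GraphG.Adj u v) || decide ((u, v) ∈ E) || decide ((v, u) ∈ E)

def chkC1 (S : List GVert) : Bool :=
  S.all fun u => S.all fun v => decide (u = v) || !decide (Zf u = Zf v)

/- soundness of the Bool checkers -/
lemma sepB_sound {A B C D : ℤ × ℤ} (h : sepB A B C D = true) : SepZ A B C D := by
  unfold sepB at h; unfold SepZ
  simpa only [Bool.or_eq_true, Bool.and_eq_true, decide_eq_true_eq, or_assoc] using h

lemma sharedB_sound {a b c d e : ℤ × ℤ} (h : sharedB a b c d e = true) : Shared a b c d e := by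
  unfold sharedB at h
  simp only [Bool.and_eq_true, Bool.not_eq_true', decide_eq_false_iff_not] at h
  exact ⟨h.1.1.1, sepB_sound h.1.1.2, sepB_sound h.1.2, sepB_sound h.2⟩

lemma allSepB_sound {a b c d e f : ℤ × ℤ} (h : allSepB a b c d e f = true) :
    AllSep a b c d e f := by
  unfold allSepB at h
  simp only [Bool.and_eq_true] at h
  exact ⟨sepB_sound h.1.1.1, sepB_sound h.1.1.2, sepB_sound h.1.2, sepB_sound h.2⟩

lemma pairBP_sound {a b : (ℤ × ℤ) × (ℤ × ℤ) × (ℤ × ℤ)} (h : pairBP a b = true) :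
    PairCondP a b := by
  unfold pairBP at h
  simp only [Bool.or_eq_true, Bool.and_eq_true, Bool.not_eq_true', decide_eq_false_iff_not,
    decide_eq_true_eq, or_assoc] at h
  unfold PairCondP
  rcases h with h | h | h | h | h | h
  · exact Or.inl h
  · exact Or.inr (Or.inl ⟨h.1.1, h.1.2, sharedB_sound h.2⟩)
  · exact Or.inr (Or.inr (Or.inl ⟨h.1.1, h.1.2, sharedB_sound h.2⟩))
  · exact Or.inr (Or.inr (Or.inr (Or.inl ⟨h.1.1, h.1.2, sharedB_sound h.2⟩)))
  · exact Or.inr (Or.inr (Or.inr (Or.inr (Or.inl ⟨h.1.1, h.1.2, sharedB_sound h.2⟩))))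
  · exact Or.inr (Or.inr (Or.inr (Or.inr (Or.inr
      ⟨h.1.1.1.1, h.1.1.1.2, h.1.1.2, h.1.2, allSepB_sound h.2⟩))))

lemma chkE_sound {S : List GVert} {E : List (GVert × GVert)} (h : chkE S E = true) :
    ∀ u ∈ S, ∀ v ∈ S, GraphG.Adj u v → (u, v) ∈ E ∨ (v, u) ∈ E := by
  intro u hu v hv hadj
  have h1 := List.all_eq_true.mp (List.all_eq_true.mp h u hu) v hv
  simp only [Bool.or_eq_true, Bool.not_eq_true', decide_eq_false_iff_not,
    decide_eq_true_eq] at h1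
  rcases h1 with (h1 | h1) | h1
  · exact absurd hadj h1
  · exact Or.inl h1
  · exact Or.inr h1

lemma chkC1_sound {S : List GVert} (h : chkC1 S = true) :
    ∀ u ∈ S, ∀ v ∈ S, u ≠ v → Zf u ≠ Zf v := by
  intro u hu v hv hne
  have h1 := List.all_eq_true.mp (List.all_eq_true.mp h u hu) v hv
  simp only [Bool.or_eq_true, Bool.not_eq_true', decide_eq_false_iff_not,
    decide_eq_true_eq] at h1
  rcases h1 with h1 | h1
  · exact absurd h1 hne
  · exact h1

/-- the cached-coordinate view of an edge -/
def edat (e : GVert × GVert) : (ℤ × ℤ) × (ℤ × ℤ) × (ℤ × ℤ) := (Zf e.1, Wf e.1 e.2, Zf e.2)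

lemma hC3_of {E : List (GVert × GVert)} {S : List GVert}
    {L : List ((ℤ × ℤ) × (ℤ × ℤ) × (ℤ × ℤ))} {Pts : List (ℤ × ℤ)}
    (hmE : E.map edat = L) (hmS : S.map Zf = Pts) (h : chkC3P L Pts = true) :
    ∀ e ∈ E, ∀ w ∈ S, Zf w = Zf e.1 ∨ Zf w = Zf e.2 ∨
      (det3 (Zf e.1) (Wf e.1 e.2) (Zf w) ≠ 0 ∧ det3 (Wf e.1 e.2) (Zf e.2) (Zf w) ≠ 0) := by
  intro e he w hw
  have hd : edat e ∈ L := hmE ▸ List.mem_map_of_mem (f := edat) he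
  have hz : Zf w ∈ Pts := hmS ▸ List.mem_map_of_mem (f := Zf) hw
  have h1 := List.all_eq_true.mp (List.all_eq_true.mp h _ hd) _ hz
  simp only [Bool.or_eq_true, Bool.and_eq_true, Bool.not_eq_true', decide_eq_false_iff_not,
    decide_eq_true_eq] at h1
  rcases h1 with (h1 | h1) | h1
  · exact Or.inl h1
  · exact Or.inr (Or.inl h1)
  · exact Or.inr (Or.inr h1)

lemma hC4_of {E : List (GVert × GVert)} {L : List ((ℤ × ℤ) × (ℤ × ℤ) × (ℤ × ℤ))}
    (hmE : E.map edat = L) (h : chkC4P L = true) :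
    ∀ e₁ ∈ E, ∀ e₂ ∈ E, PairCondP (edat e₁) (edat e₂) := by
  intro e₁ h1 e₂ h2
  have hd1 : edat e₁ ∈ L := hmE ▸ List.mem_map_of_mem (f := edat) h1
  have hd2 : edat e₂ ∈ L := hmE ▸ List.mem_map_of_mem (f := edat) h2
  exact pairBP_sound (List.all_eq_true.mp (List.all_eq_true.mp h _ hd1) _ hd2)

/- resolving intersections of two drawn edges -/
lemma allsep_resolve {A1 A2 A3 B1 B2 B3 : ℤ × ℤ} {p : ℝ × ℝ}
    (h : AllSep A1 A2 A3 B1 B2 B3) (h1 : OnPl A1 A2 A3 p) (h2 : OnPl B1 B2 B3 p) : False := by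
  obtain ⟨s11, s12, s21, s22⟩ := h
  rcases h1 with ⟨t, t0, t1, te⟩ | ⟨t, t0, t1, te⟩ <;>
    rcases h2 with ⟨u, u0, u1, ue⟩ | ⟨u, u0, u1, ue⟩
  · exact sep_none s11 t0 t1 u0 u1 (te.trans ue.symm)
  · exact sep_none s12 t0 t1 u0 u1 (te.trans ue.symm)
  · exact sep_none s21 t0 t1 u0 u1 (te.trans ue.symm)
  · exact sep_none s22 t0 t1 u0 u1 (te.trans ue.symm)

lemma shared_resolve {Zz N1 E1 N2 E2 : ℤ × ℤ} {p : ℝ × ℝ}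
    (h : Shared Zz N1 E1 N2 E2) (h1 : OnPl Zz N1 E1 p) (h2 : OnPl Zz N2 E2 p) : p = pt Zz := by
  obtain ⟨hd, sA, sB, sC⟩ := h
  rcases h1 with ⟨t, t0, t1, te⟩ | ⟨t, t0, t1, te⟩ <;>
    rcases h2 with ⟨u, u0, u1, ue⟩ | ⟨u, u0, u1, ue⟩
  · have hdR : detR (pt Zz) (pt N1) (pt N2) ≠ 0 := by
      rw [detR_pt]; exact_mod_cast hd
    have hz := shared_core hdR (te.trans ue.symm)
    rw [← te, hz]
  · exact (sep_none sA t0 t1 u0 u1 (te.trans ue.symm)).elim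
  · exact (sep_none sB t0 t1 u0 u1 (te.trans ue.symm)).elim
  · exact (sep_none sC t0 t1 u0 u1 (te.trans ue.symm)).elim

lemma resolve {a b c d : GVert} {p : ℝ × ℝ}
    (hc : PairCondP (edat (a, b)) (edat (c, d)))
    (hne : ¬((a = c ∧ b = d) ∨ (a = d ∧ b = c)))
    (iac : Zf a = Zf c → a = c) (iad : Zf a = Zf d → a = d)
    (ibc : Zf b = Zf c → b = c) (ibd : Zf b = Zf d → b = d)
    (h1 : OnPl (Zf a) (Wf a b) (Zf b) p) (h2 : OnPl (Zf c) (Wf c d) (Zf d) p) :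
    ∃ z, (z = a ∨ z = b) ∧ (z = c ∨ z = d) ∧ p = Df z := by
  unfold PairCondP edat at hc
  dsimp only at hc
  rcases hc with ⟨e1, e2⟩ | ⟨e1, _, hsh⟩ | ⟨e1, _, hsh⟩ | ⟨e1, _, hsh⟩ | ⟨e1, _, hsh⟩ |
    ⟨_, _, _, _, hall⟩
  · exact absurd (Or.inl ⟨iac e1, ibd e2⟩) hne
  · refine ⟨a, Or.inl rfl, Or.inl (iac e1), ?_⟩
    exact shared_resolve hsh h1 (by rw [← e1] at h2; exact h2)
  · refine ⟨a, Or.inl rfl, Or.inr (iad e1), ?_⟩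
    exact shared_resolve hsh h1 (by rw [← e1] at h2; exact OnPl_flip h2)
  · refine ⟨b, Or.inr rfl, Or.inl (ibc e1), ?_⟩
    exact shared_resolve hsh (OnPl_flip h1) (by rw [← e1] at h2; exact h2)
  · refine ⟨b, Or.inr rfl, Or.inr (ibd e1), ?_⟩
    exact shared_resolve hsh (OnPl_flip h1) (by rw [← e1] at h2; exact OnPl_flip h2)
  · exact (allsep_resolve hall h1 h2).elim

lemma hW : ∀ u v : GVert, Wf u v = Wf v u := by decide

lemma hG1 : ∀ u v : GVert, GraphG.Adj u v → det3 (Zf u) (Wf u v) (Zf v) ≠ 0 := by decide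

/- the master frame lemma -/
lemma frame_ok (S : List GVert) (E : List (GVert × GVert))
    (hE : ∀ u ∈ S, ∀ v ∈ S, GraphG.Adj u v → (u, v) ∈ E ∨ (v, u) ∈ E)
    (hC1 : ∀ u ∈ S, ∀ v ∈ S, u ≠ v → Zf u ≠ Zf v)
    (hC3 : ∀ e ∈ E, ∀ w ∈ S, Zf w = Zf e.1 ∨ Zf w = Zf e.2 ∨
      (det3 (Zf e.1) (Wf e.1 e.2) (Zf w) ≠ 0 ∧ det3 (Wf e.1 e.2) (Zf e.2) (Zf w) ≠ 0))
    (hC4 : ∀ e₁ ∈ E, ∀ e₂ ∈ E, PairCondP (edat e₁) (edat e₂)) :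
    IsPlanarTopoFrame GraphG {v | v ∈ S} Df γf := by
  have inj : ∀ u ∈ S, ∀ v ∈ S, Zf u = Zf v → u = v := by
    intro u hu v hv hz
    by_contra hne
    exact hC1 u hu v hv hne hz
  refine ⟨?_, ?_, ?_⟩
  · intro u hu v hv hDuv
    exact inj u hu v hv (pt_inj hDuv)
  · intro u v h w hu hv hw hmem
    by_cases hwu : w = u
    · exact Or.inl hwu
    by_cases hwv : w = v
    · exact Or.inr hwv
    exfalso
    have hOn : OnPl (Zf u) (Wf u v) (Zf v) (Df w) := mem_range_plPath hmem
    rcases hE u hu v hv h with he | he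
    · rcases hC3 _ he w hw with hz | hz | ⟨d1, d2⟩
      · exact hwu (inj w hw u hu hz)
      · exact hwv (inj w hw v hv hz)
      · dsimp only at d1 d2
        rcases hOn with ⟨t, _, _, te⟩ | ⟨t, _, _, te⟩ <;>
          rw [show Df w = pt (Zf w) from rfl] at te
        · exact off_seg (by rw [detR_pt]; exact_mod_cast d1) te
        · exact off_seg (by rw [detR_pt]; exact_mod_cast d2) te
    · rcases hC3 _ he w hw with hz | hz | ⟨d1, d2⟩
      · exact hwv (inj w hw v hv hz)
      · exact hwu (inj w hw u hu hz)
      · dsimp only at d1 d2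
        rw [hW v u] at d1 d2
        rcases hOn with ⟨t, _, _, te⟩ | ⟨t, _, _, te⟩ <;>
          rw [show Df w = pt (Zf w) from rfl] at te
        · refine off_seg (fun hz => ?_) te
          have hA : detR (pt (Wf u v)) (pt (Zf u)) (pt (Zf w)) ≠ 0 := by
            rw [detR_pt]; exact_mod_cast d2
          have hsw := detR_swap (pt (Wf u v)) (pt (Zf u)) (pt (Zf w))
          rw [hz] at hsw
          exact hA (by linarith)
        · refine off_seg (fun hz => ?_) te
          have hA : detR (pt (Zf v)) (pt (Wf u v)) (pt (Zf w)) ≠ 0 := by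
            rw [detR_pt]; exact_mod_cast d1
          have hsw := detR_swap (pt (Zf v)) (pt (Wf u v)) (pt (Zf w))
          rw [hz] at hsw
          exact hA (by linarith)
  · intro u v x y h₁ h₂ hu hv hx hy hne p hp
    obtain ⟨hp1, hp2⟩ := hp
    have hOn1 : OnPl (Zf u) (Wf u v) (Zf v) p := mem_range_plPath hp1
    have hOn2 : OnPl (Zf x) (Wf x y) (Zf y) p := mem_range_plPath hp2
    rcases hE u hu v hv h₁ with he1 | he1 <;> rcases hE x hx y hy h₂ with he2 | he2
    · obtain ⟨z, hz1, hz2, hzp⟩ := resolve (hC4 _ he1 _ he2) hne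
        (inj u hu x hx) (inj u hu y hy) (inj v hv x hx) (inj v hv y hy) hOn1 hOn2
      exact ⟨z, hz1, hz2, hzp⟩
    · have hOn2' : OnPl (Zf y) (Wf y x) (Zf x) p := by rw [hW y x]; exact OnPl_flip hOn2
      obtain ⟨z, hz1, hz2, hzp⟩ := resolve (hC4 _ he1 _ he2) (by tauto)
        (inj u hu y hy) (inj u hu x hx) (inj v hv y hy) (inj v hv x hx) hOn1 hOn2'
      exact ⟨z, hz1, by tauto, hzp⟩
    · have hOn1' : OnPl (Zf v) (Wf v u) (Zf u) p := by rw [hW v u]; exact OnPl_flip hOn1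
      obtain ⟨z, hz1, hz2, hzp⟩ := resolve (hC4 _ he1 _ he2) (by tauto)
        (inj v hv x hx) (inj v hv y hy) (inj u hu x hx) (inj u hu y hy) hOn1' hOn2
      exact ⟨z, by tauto, hz2, hzp⟩
    · have hOn1' : OnPl (Zf v) (Wf v u) (Zf u) p := by rw [hW v u]; exact OnPl_flip hOn1
      have hOn2' : OnPl (Zf y) (Wf y x) (Zf x) p := by rw [hW y x]; exact OnPl_flip hOn2
      obtain ⟨z, hz1, hz2, hzp⟩ := resolve (hC4 _ he1 _ he2) (by tauto)
        (inj v hv y hy) (inj v hv x hx) (inj u hu y hy) (inj u hu x hx) hOn1' hOn2'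
      exact ⟨z, by tauto, by tauto, hzp⟩

/- the schedule -/
def tIdx (i : Fin 4) (j : Fin 2) : ℕ := 1 + i.val + 4 * j.val

def sOf : GVert → ℕ
  | .q i j => tIdx i j
  | .r i j => tIdx i j
  | _ => 1

def eOf : GVert → ℕ
  | .q i j => tIdx i j
  | .r i j => tIdx i j
  | _ => 8

def fSL (i : Fin 4) (j : Fin 2) : List GVert :=
  [.a 0, .a 1, .a 2, .a 3, .b 0, .b 1, .b 2, .b 3, .c 0, .c 1, .c 2, .c 3, .q i j, .r i j]

def fE (i : Fin 4) (j : Fin 2) : List (GVert × GVert) :=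
  [(.a 0, .a 1), (.a 1, .a 2), (.a 2, .a 3), (.a 3, .a 0),
   (.b 0, .b 1), (.b 1, .b 2), (.b 2, .b 3), (.b 3, .b 0),
   (.c 0, .c 1), (.c 1, .c 2), (.c 2, .c 3), (.c 3, .c 0),
   (.q i j, .a 0), (.q i j, .a 1), (.q i j, .a 2), (.q i j, .a 3),
   (.q i j, .b 0), (.q i j, .b 1), (.q i j, .b 2), (.q i j, .b 3),
   (.q i j, .c 0), (.q i j, .c 1), (.q i j, .c 2), (.q i j, .c 3),
   (.r i j, .q i j), (.r i j, .a i), (.r i j, .a (i + 1)),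
   (.r i j, .b i), (.r i j, .b (i + 1)), (.r i j, .c i), (.r i j, .c (i + 1))]

def Dl0 : List ((ℤ × ℤ) × (ℤ × ℤ) × (ℤ × ℤ)) :=
  [((-40000, 20000), (-60008, -19996), (-80000, -60000)),
   ((-80000, -60000), (9998, -70018), (100000, -80000)),
   ((100000, -80000), (80014, -9996), (60000, 60000)),
   ((60000, 60000), (10004, 39990), (-40000, 20000)),
   ((560000, 620000), (539992, 580004), (520000, 540000)),
   ((520000, 540000), (609998, 529982), (700000, 520000)),
   ((700000, 520000), (680014, 590004), (660000, 660000)),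
   ((660000, 660000), (610004, 639990), (560000, 620000)),
   ((1160000, 1220000), (1139992, 1180004), (1120000, 1140000)),
   ((1120000, 1140000), (1209998, 1129982), (1300000, 1120000)),
   ((1300000, 1120000), (1280014, 1190004), (1260000, 1260000)),
   ((1260000, 1260000), (1210004, 1239990), (1160000, 1220000)),
   ((14000000, 7600000), (6980758, 3808596), (-40000, 20000)),
   ((14000000, 7600000), (200000, -600000), (-80000, -60000)),
   ((14000000, 7600000), (7050768, 3758610), (100000, -80000)),
   ((14000000, 7600000), (7030754, 3828606), (60000, 60000)),
   ((14000000, 7600000), (7280698, 4108656), (560000, 620000)),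
   ((14000000, 7600000), (480000, 360000), (520000, 540000)),
   ((14000000, 7600000), (7350708, 4058670), (700000, 520000)),
   ((14000000, 7600000), (7330694, 4128666), (660000, 660000)),
   ((14000000, 7600000), (7580638, 4408716), (1160000, 1220000)),
   ((14000000, 7600000), (960000, 880000), (1120000, 1140000)),
   ((14000000, 7600000), (7650648, 4358730), (1300000, 1120000)),
   ((14000000, 7600000), (7630634, 4428726), (1260000, 1260000)),
   ((-8000000, 1200000), (2999360, 4402200), (14000000, 7600000)),
   ((-8000000, 1200000), (-4019882, 610796), (-40000, 20000)),
   ((-8000000, 1200000), (-4039874, 570792), (-80000, -60000)),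
   ((-8000000, 1200000), (-3719942, 910856), (560000, 620000)),
   ((-8000000, 1200000), (-3739934, 870852), (520000, 540000)),
   ((-8000000, 1200000), (-3420002, 1210916), (1160000, 1220000)),
   ((-8000000, 1200000), (-3439994, 1170912), (1120000, 1140000))]

def Pts0 : List (ℤ × ℤ) :=
  [(-40000, 20000), (-80000, -60000), (100000, -80000), (60000, 60000), (560000, 620000), (520000, 540000), (700000, 520000), (660000, 660000), (1160000, 1220000), (1120000, 1140000), (1300000, 1120000), (1260000, 1260000), (14000000, 7600000), (-8000000, 1200000)]

def Dl1 : List ((ℤ × ℤ) × (ℤ × ℤ) × (ℤ × ℤ)) :=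
  [((-40000, 20000), (-60008, -19996), (-80000, -60000)),
   ((-80000, -60000), (9998, -70018), (100000, -80000)),
   ((100000, -80000), (80014, -9996), (60000, 60000)),
   ((60000, 60000), (10004, 39990), (-40000, 20000)),
   ((560000, 620000), (539992, 580004), (520000, 540000)),
   ((520000, 540000), (609998, 529982), (700000, 520000)),
   ((700000, 520000), (680014, 590004), (660000, 660000)),
   ((660000, 660000), (610004, 639990), (560000, 620000)),
   ((1160000, 1220000), (1139992, 1180004), (1120000, 1140000)),
   ((1120000, 1140000), (1209998, 1129982), (1300000, 1120000)),
   ((1300000, 1120000), (1280014, 1190004), (1260000, 1260000)),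
   ((1260000, 1260000), (1210004, 1239990), (1160000, 1220000)),
   ((2400000, 10000000), (1180998, 5009756), (-40000, 20000)),
   ((2400000, 10000000), (1161006, 4969752), (-80000, -60000)),
   ((2400000, 10000000), (1251008, 4959770), (100000, -80000)),
   ((2400000, 10000000), (1230994, 5029766), (60000, 60000)),
   ((2400000, 10000000), (1480938, 5309816), (560000, 620000)),
   ((2400000, 10000000), (1460946, 5269812), (520000, 540000)),
   ((2400000, 10000000), (1550948, 5259830), (700000, 520000)),
   ((2400000, 10000000), (1530934, 5329826), (660000, 660000)),
   ((2400000, 10000000), (1780878, 5609876), (1160000, 1220000)),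
   ((2400000, 10000000), (1760886, 5569872), (1120000, 1140000)),
   ((2400000, 10000000), (1850888, 5559890), (1300000, 1120000)),
   ((2400000, 10000000), (1830874, 5629886), (1260000, 1260000)),
   ((1800000, -8000000), (2098200, 1000060), (2400000, 10000000)),
   ((1800000, -8000000), (859206, -4030188), (-80000, -60000)),
   ((1800000, -8000000), (949208, -4040170), (100000, -80000)),
   ((1800000, -8000000), (1159146, -3730128), (520000, 540000)),
   ((1800000, -8000000), (1249148, -3740110), (700000, 520000)),
   ((1800000, -8000000), (1459086, -3430068), (1120000, 1140000)),
   ((1800000, -8000000), (1549088, -3440050), (1300000, 1120000))]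

def Pts1 : List (ℤ × ℤ) :=
  [(-40000, 20000), (-80000, -60000), (100000, -80000), (60000, 60000), (560000, 620000), (520000, 540000), (700000, 520000), (660000, 660000), (1160000, 1220000), (1120000, 1140000), (1300000, 1120000), (1260000, 1260000), (2400000, 10000000), (1800000, -8000000)]

def Dl2 : List ((ℤ × ℤ) × (ℤ × ℤ) × (ℤ × ℤ)) :=
  [((-40000, 20000), (-60008, -19996), (-80000, -60000)),
   ((-80000, -60000), (9998, -70018), (100000, -80000)),
   ((100000, -80000), (80014, -9996), (60000, 60000)),
   ((60000, 60000), (10004, 39990), (-40000, 20000)),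
   ((560000, 620000), (539992, 580004), (520000, 540000)),
   ((520000, 540000), (609998, 529982), (700000, 520000)),
   ((700000, 520000), (680014, 590004), (660000, 660000)),
   ((660000, 660000), (610004, 639990), (560000, 620000)),
   ((1160000, 1220000), (1139992, 1180004), (1120000, 1140000)),
   ((1120000, 1140000), (1209998, 1129982), (1300000, 1120000)),
   ((1300000, 1120000), (1280014, 1190004), (1260000, 1260000)),
   ((1260000, 1260000), (1210004, 1239990), (1160000, 1220000)),
   ((-8000000, -2000000), (-4020202, -989204), (-40000, 20000)),
   ((-8000000, -2000000), (-4040194, -1029208), (-80000, -60000)),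
   ((-8000000, -2000000), (-3950192, -1039190), (100000, -80000)),
   ((-8000000, -2000000), (-3970206, -969194), (60000, 60000)),
   ((-8000000, -2000000), (-3720262, -689144), (560000, 620000)),
   ((-8000000, -2000000), (-3740254, -729148), (520000, 540000)),
   ((-8000000, -2000000), (-3650252, -739130), (700000, 520000)),
   ((-8000000, -2000000), (-3670266, -669134), (660000, 660000)),
   ((-8000000, -2000000), (-3420322, -389084), (1160000, 1220000)),
   ((-8000000, -2000000), (-3440314, -429088), (1120000, 1140000)),
   ((-8000000, -2000000), (-3350312, -439070), (1300000, 1120000)),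
   ((-8000000, -2000000), (-3370326, -369074), (1260000, 1260000)),
   ((8000000, -1000000), (100, -1501600), (-8000000, -2000000)),
   ((8000000, -1000000), (4049908, -540790), (100000, -80000)),
   ((8000000, -1000000), (4029894, -470794), (60000, 60000)),
   ((8000000, -1000000), (4349848, -240730), (700000, 520000)),
   ((8000000, -1000000), (4329834, -170734), (660000, 660000)),
   ((8000000, -1000000), (4649788, 59330), (1300000, 1120000)),
   ((8000000, -1000000), (4629774, 129326), (1260000, 1260000))]

def Pts2 : List (ℤ × ℤ) :=
  [(-40000, 20000), (-80000, -60000), (100000, -80000), (60000, 60000), (560000, 620000), (520000, 540000), (700000, 520000), (660000, 660000), (1160000, 1220000), (1120000, 1140000), (1300000, 1120000), (1260000, 1260000), (-8000000, -2000000), (8000000, -1000000)]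

def Dl3 : List ((ℤ × ℤ) × (ℤ × ℤ) × (ℤ × ℤ)) :=
  [((-40000, 20000), (-60008, -19996), (-80000, -60000)),
   ((-80000, -60000), (9998, -70018), (100000, -80000)),
   ((100000, -80000), (80014, -9996), (60000, 60000)),
   ((60000, 60000), (10004, 39990), (-40000, 20000)),
   ((560000, 620000), (539992, 580004), (520000, 540000)),
   ((520000, 540000), (609998, 529982), (700000, 520000)),
   ((700000, 520000), (680014, 590004), (660000, 660000)),
   ((660000, 660000), (610004, 639990), (560000, 620000)),
   ((1160000, 1220000), (1139992, 1180004), (1120000, 1140000)),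
   ((1120000, 1140000), (1209998, 1129982), (1300000, 1120000)),
   ((1300000, 1120000), (1280014, 1190004), (1260000, 1260000)),
   ((1260000, 1260000), (1210004, 1239990), (1160000, 1220000)),
   ((-9000000, -16000000), (-4521602, -7989104), (-40000, 20000)),
   ((-9000000, -16000000), (-4541594, -8029108), (-80000, -60000)),
   ((-9000000, -16000000), (-4451592, -8039090), (100000, -80000)),
   ((-9000000, -16000000), (280000, 200000), (60000, 60000)),
   ((-9000000, -16000000), (-4221662, -7689044), (560000, 620000)),
   ((-9000000, -16000000), (-4241654, -7729048), (520000, 540000)),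
   ((-9000000, -16000000), (-4151652, -7739030), (700000, 520000)),
   ((-9000000, -16000000), (900000, 820000), (660000, 660000)),
   ((-9000000, -16000000), (-3921722, -7388984), (1160000, 1220000)),
   ((-9000000, -16000000), (-3941714, -7428988), (1120000, 1140000)),
   ((-9000000, -16000000), (-3851712, -7438970), (1300000, 1120000)),
   ((-9000000, -16000000), (1480000, 1320000), (1260000, 1260000)),
   ((-1000000, 10000000), (-4997400, -3000800), (-9000000, -16000000)),
   ((-1000000, 10000000), (-469006, 5030106), (60000, 60000)),
   ((-1000000, 10000000), (-519002, 5010096), (-40000, 20000)),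
   ((-1000000, 10000000), (-169066, 5330166), (660000, 660000)),
   ((-1000000, 10000000), (-219062, 5310156), (560000, 620000)),
   ((-1000000, 10000000), (130874, 5630226), (1260000, 1260000)),
   ((-1000000, 10000000), (80878, 5610216), (1160000, 1220000))]

def Pts3 : List (ℤ × ℤ) :=
  [(-40000, 20000), (-80000, -60000), (100000, -80000), (60000, 60000), (560000, 620000), (520000, 540000), (700000, 520000), (660000, 660000), (1160000, 1220000), (1120000, 1140000), (1300000, 1120000), (1260000, 1260000), (-9000000, -16000000), (-1000000, 10000000)]

lemma hC4P0 : chkC4P Dl0 = true := by decide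
lemma hC4P1 : chkC4P Dl1 = true := by decide
lemma hC4P2 : chkC4P Dl2 = true := by decide
lemma hC4P3 : chkC4P Dl3 = true := by decide

lemma hC3P0 : chkC3P Dl0 Pts0 = true := by decide
lemma hC3P1 : chkC3P Dl1 Pts1 = true := by decide
lemma hC3P2 : chkC3P Dl2 Pts2 = true := by decide
lemma hC3P3 : chkC3P Dl3 Pts3 = true := by decide

lemma frameLem_1 : IsPlanarTopoFrame GraphG {v | v ∈ fSL 0 0} Df γf :=
  frame_ok (fSL 0 0) (fE 0 0) (chkE_sound (by decide)) (chkC1_sound (by decide))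
    (hC3_of (by decide) (by decide) hC3P0) (hC4_of (by decide) hC4P0)

lemma frameLem_2 : IsPlanarTopoFrame GraphG {v | v ∈ fSL 1 0} Df γf :=
  frame_ok (fSL 1 0) (fE 1 0) (chkE_sound (by decide)) (chkC1_sound (by decide))
    (hC3_of (by decide) (by decide) hC3P1) (hC4_of (by decide) hC4P1)

lemma frameLem_3 : IsPlanarTopoFrame GraphG {v | v ∈ fSL 2 0} Df γf :=
  frame_ok (fSL 2 0) (fE 2 0) (chkE_sound (by decide)) (chkC1_sound (by decide))
    (hC3_of (by decide) (by decide) hC3P2) (hC4_of (by decide) hC4P2)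

lemma frameLem_4 : IsPlanarTopoFrame GraphG {v | v ∈ fSL 3 0} Df γf :=
  frame_ok (fSL 3 0) (fE 3 0) (chkE_sound (by decide)) (chkC1_sound (by decide))
    (hC3_of (by decide) (by decide) hC3P3) (hC4_of (by decide) hC4P3)

lemma frameLem_5 : IsPlanarTopoFrame GraphG {v | v ∈ fSL 0 1} Df γf :=
  frame_ok (fSL 0 1) (fE 0 1) (chkE_sound (by decide)) (chkC1_sound (by decide))
    (hC3_of (by decide) (by decide) hC3P0) (hC4_of (by decide) hC4P0)

lemma frameLem_6 : IsPlanarTopoFrame GraphG {v | v ∈ fSL 1 1} Df γf :=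
  frame_ok (fSL 1 1) (fE 1 1) (chkE_sound (by decide)) (chkC1_sound (by decide))
    (hC3_of (by decide) (by decide) hC3P1) (hC4_of (by decide) hC4P1)

lemma frameLem_7 : IsPlanarTopoFrame GraphG {v | v ∈ fSL 2 1} Df γf :=
  frame_ok (fSL 2 1) (fE 2 1) (chkE_sound (by decide)) (chkC1_sound (by decide))
    (hC3_of (by decide) (by decide) hC3P2) (hC4_of (by decide) hC4P2)

lemma frameLem_8 : IsPlanarTopoFrame GraphG {v | v ∈ fSL 3 1} Df γf :=
  frame_ok (fSL 3 1) (fE 3 1) (chkE_sound (by decide)) (chkC1_sound (by decide))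
    (hC3_of (by decide) (by decide) hC3P3) (hC4_of (by decide) hC4P3)

end SPAux

open SPAux in
/-- The graph `G` admits a planar (topological) storyplan. -/
theorem graphG_has_planar_storyplan : HasPlanarStoryplan GraphG := by
  have hMeet : ∀ u v : GVert, GraphG.Adj u v →
      sOf u ≤ max (sOf u) (sOf v) ∧ max (sOf u) (sOf v) ≤ eOf u ∧
      sOf v ≤ max (sOf u) (sOf v) ∧ max (sOf u) (sOf v) ≤ eOf v := by decide
  refine ⟨8, sOf, eOf, Df, γf, by norm_num, by decide, ?_, ?_, ?_, ?_⟩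
  · intro u v h
    show plPath (Df v) (pt (Wf v u)) (Df u) = (plPath (Df u) (pt (Wf u v)) (Df v)).symm
    rw [plPath_symm, hW v u]
  · intro u v h
    refine plPath_injective ?_
    have := hG1 u v h
    show detR (pt (Zf u)) (pt (Wf u v)) (pt (Zf v)) ≠ 0
    rw [detR_pt]
    exact_mod_cast this
  · intro u v h
    exact ⟨max (sOf u) (sOf v), (hMeet u v h).1, (hMeet u v h).2.1, (hMeet u v h).2.2.1,
      (hMeet u v h).2.2.2⟩
  · intro t ht1 ht8
    interval_cases t
    · have hv : ∀ v : GVert, (sOf v ≤ 1 ∧ 1 ≤ eOf v) ↔ v ∈ fSL 0 0 := by decide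
      rw [show {v : GVert | sOf v ≤ 1 ∧ 1 ≤ eOf v} = {v : GVert | v ∈ fSL 0 0} from
        Set.ext fun v => hv v]
      exact frameLem_1
    · have hv : ∀ v : GVert, (sOf v ≤ 2 ∧ 2 ≤ eOf v) ↔ v ∈ fSL 1 0 := by decide
      rw [show {v : GVert | sOf v ≤ 2 ∧ 2 ≤ eOf v} = {v : GVert | v ∈ fSL 1 0} from
        Set.ext fun v => hv v]
      exact frameLem_2
    · have hv : ∀ v : GVert, (sOf v ≤ 3 ∧ 3 ≤ eOf v) ↔ v ∈ fSL 2 0 := by decide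
      rw [show {v : GVert | sOf v ≤ 3 ∧ 3 ≤ eOf v} = {v : GVert | v ∈ fSL 2 0} from
        Set.ext fun v => hv v]
      exact frameLem_3
    · have hv : ∀ v : GVert, (sOf v ≤ 4 ∧ 4 ≤ eOf v) ↔ v ∈ fSL 3 0 := by decide
      rw [show {v : GVert | sOf v ≤ 4 ∧ 4 ≤ eOf v} = {v : GVert | v ∈ fSL 3 0} from
        Set.ext fun v => hv v]
      exact frameLem_4
    · have hv : ∀ v : GVert, (sOf v ≤ 5 ∧ 5 ≤ eOf v) ↔ v ∈ fSL 0 1 := by decide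
      rw [show {v : GVert | sOf v ≤ 5 ∧ 5 ≤ eOf v} = {v : GVert | v ∈ fSL 0 1} from
        Set.ext fun v => hv v]
      exact frameLem_5
    · have hv : ∀ v : GVert, (sOf v ≤ 6 ∧ 6 ≤ eOf v) ↔ v ∈ fSL 1 1 := by decide
      rw [show {v : GVert | sOf v ≤ 6 ∧ 6 ≤ eOf v} = {v : GVert | v ∈ fSL 1 1} from
        Set.ext fun v => hv v]
      exact frameLem_6
    · have hv : ∀ v : GVert, (sOf v ≤ 7 ∧ 7 ≤ eOf v) ↔ v ∈ fSL 2 1 := by decide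
      rw [show {v : GVert | sOf v ≤ 7 ∧ 7 ≤ eOf v} = {v : GVert | v ∈ fSL 2 1} from
        Set.ext fun v => hv v]
      exact frameLem_7
    · have hv : ∀ v : GVert, (sOf v ≤ 8 ∧ 8 ≤ eOf v) ↔ v ∈ fSL 3 1 := by decide
      rw [show {v : GVert | sOf v ≤ 8 ∧ 8 ≤ eOf v} = {v : GVert | v ∈ fSL 3 1} from
        Set.ext fun v => hv v]
      exact frameLem_8
end

section
/- In every planar geometric storyplan of the graph G, there exist at least 6 distinct index pairs (i,j) ∈ {1,2,3,4} × {1,2} such that for each of them there is a time step at which the apex pair q_i^j, r_i^j and all twelve cycle vertices are simultaneously visible. -/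
/-- The straight-line drawing `D` of the subgraph of `G` induced by the visible
vertex set `S` is planar. -/
def IsPlanarSLFrame {V : Type*} (G : SimpleGraph V) (S : Set V) (D : V → ℝ × ℝ) : Prop :=
  Set.InjOn D S ∧
  (∀ u v w, G.Adj u v → u ∈ S → v ∈ S → w ∈ S → w ≠ u → w ≠ v →
      D w ∉ openSegment ℝ (D u) (D v)) ∧
  (∀ u v x y, G.Adj u v → G.Adj x y → u ∈ S → v ∈ S → x ∈ S → y ∈ S →
      ¬((u = x ∧ v = y) ∨ (u = y ∧ v = x)) →
      ∀ p ∈ segment ℝ (D u) (D v) ∩ segment ℝ (D x) (D y),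
        ∃ z, (z = u ∨ z = v) ∧ (z = x ∨ z = y) ∧ p = D z)

/-- `(len, s, e, D)` is a planar geometric storyplan of `G`: `len ≥ 1` time steps,
each vertex `v` is visible on the nonempty interval `[s v, e v] ⊆ [1, len]`,
the endpoints of every edge co-occur, and every frame is a planar
straight-line drawing. -/
def IsGeomStoryplan {V : Type*} (G : SimpleGraph V)
    (len : ℕ) (s e : V → ℕ) (D : V → ℝ × ℝ) : Prop :=
  1 ≤ len ∧
  (∀ v, 1 ≤ s v ∧ s v ≤ e v ∧ e v ≤ len) ∧
  (∀ u v, G.Adj u v → ∃ t, s u ≤ t ∧ t ≤ e u ∧ s v ≤ t ∧ t ≤ e v) ∧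
  (∀ t, 1 ≤ t → t ≤ len → IsPlanarSLFrame G {v | s v ≤ t ∧ t ≤ e v} D)

/-- `G` admits a planar geometric storyplan. -/
def HasGeomStoryplan {V : Type*} (G : SimpleGraph V) : Prop :=
  ∃ len s e D, IsGeomStoryplan G len s e D

/-- Vertex `v` is visible at time `t`. -/
def Visible (s e : GVert → ℕ) (t : ℕ) (v : GVert) : Prop :=
  s v ≤ t ∧ t ≤ e v

/-- All twelve cycle vertices are visible at time `t`. -/
def CyclesVisible (s e : GVert → ℕ) (t : ℕ) : Prop :=
  ∀ k : Fin 4, Visible s e t (.a k) ∧ Visible s e t (.b k) ∧ Visible s e t (.c k)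



noncomputable section

/-- Twice the signed area of the triangle `a b c`. -/
def det3 (a b c : ℝ × ℝ) : ℝ :=
  (b.1 - a.1) * (c.2 - a.2) - (b.2 - a.2) * (c.1 - a.1)

lemma det3_cyc (a b c : ℝ × ℝ) : det3 a b c = det3 b c a := by
  simp only [det3]; ring

lemma det3_abb (a b : ℝ × ℝ) : det3 a b b = 0 := by simp only [det3]; ring
lemma det3_aba (a b : ℝ × ℝ) : det3 a b a = 0 := by simp only [det3]; ring
lemma det3_aab (a b : ℝ × ℝ) : det3 a a b = 0 := by simp only [det3]; ring

lemma smul_fst (c : ℝ) (p : ℝ × ℝ) : (c • p).1 = c * p.1 := rfl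
lemma smul_snd (c : ℝ) (p : ℝ × ℝ) : (c • p).2 = c * p.2 := rfl

/-- `det3 a b ·` is affine: value on a 3-term affine combination. -/
lemma det3_combo3 (a b x y z : ℝ × ℝ) {α β γ : ℝ} (h : α + β + γ = 1) :
    det3 a b (α • x + β • y + γ • z) =
      α * det3 a b x + β * det3 a b y + γ * det3 a b z := by
  have hγ : γ = 1 - α - β := by linarith
  subst hγ
  simp only [det3, Prod.fst_add, Prod.snd_add, smul_fst, smul_snd]
  ring

lemma det3_combo3_fst (a b x y z : ℝ × ℝ) {α β γ : ℝ} (h : α + β + γ = 1) :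
    det3 (α • x + β • y + γ • z) a b =
      α * det3 x a b + β * det3 y a b + γ * det3 z a b := by
  have hγ : γ = 1 - α - β := by linarith
  subst hγ
  simp only [det3, Prod.fst_add, Prod.snd_add, smul_fst, smul_snd]
  ring

lemma det3_combo3_snd (a b x y z : ℝ × ℝ) {α β γ : ℝ} (h : α + β + γ = 1) :
    det3 a (α • x + β • y + γ • z) b =
      α * det3 a x b + β * det3 a y b + γ * det3 a z b := by
  have hγ : γ = 1 - α - β := by linarith
  subst hγ
  simp only [det3, Prod.fst_add, Prod.snd_add, smul_fst, smul_snd]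
  ring

lemma det3_combo2 (a b x y : ℝ × ℝ) {α β : ℝ} (h : α + β = 1) :
    det3 a b (α • x + β • y) = α * det3 a b x + β * det3 a b y := by
  have hβ : β = 1 - α := by linarith
  subst hβ
  simp only [det3, Prod.fst_add, Prod.snd_add, smul_fst, smul_snd]
  ring

/-- Barycentric coordinate sum identity. -/
lemma bary_sum (a b c z : ℝ × ℝ) :
    det3 z b c + det3 a z c + det3 a b z = det3 a b c := by
  simp only [det3]; ring

/-- Barycentric representation. -/
lemma bary (a b c z : ℝ × ℝ) (hd : det3 a b c ≠ 0) :
    z = (det3 z b c / det3 a b c) • a + (det3 a z c / det3 a b c) • b +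
        (det3 a b z / det3 a b c) • c := by
  have h1 : (det3 z b c) * a.1 + (det3 a z c) * b.1 + (det3 a b z) * c.1
      = (det3 a b c) * z.1 := by simp only [det3]; ring
  have h2 : (det3 z b c) * a.2 + (det3 a z c) * b.2 + (det3 a b z) * c.2
      = (det3 a b c) * z.2 := by simp only [det3]; ring
  apply Prod.ext
  · simp only [Prod.fst_add, smul_fst]
    field_simp
    linarith [h1]
  · simp only [Prod.snd_add, smul_snd]
    field_simp
    linarith [h2]

/-- Membership in the (possibly degenerate) closed triangle, as a convex
combination. -/
def TriMem (z a b c : ℝ × ℝ) : Prop :=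
  ∃ α β γ : ℝ, 0 ≤ α ∧ 0 ≤ β ∧ 0 ≤ γ ∧ α + β + γ = 1 ∧ z = α • a + β • b + γ • c

/-- Strict interior of a nondegenerate triangle, as a convex combination with
positive weights. -/
def StrictIn (z a b c : ℝ × ℝ) : Prop :=
  det3 a b c ≠ 0 ∧
  ∃ α β γ : ℝ, 0 < α ∧ 0 < β ∧ 0 < γ ∧ α + β + γ = 1 ∧ z = α • a + β • b + γ • c

lemma StrictIn.triMem {z a b c : ℝ × ℝ} (h : StrictIn z a b c) : TriMem z a b c := by
  obtain ⟨-, α, β, γ, h1, h2, h3, h4, h5⟩ := h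
  exact ⟨α, β, γ, le_of_lt h1, le_of_lt h2, le_of_lt h3, h4, h5⟩

lemma triMem_vert1 (a b c : ℝ × ℝ) : TriMem a a b c :=
  ⟨1, 0, 0, by norm_num, by norm_num, by norm_num, by norm_num, by
    simp [one_smul, zero_smul]⟩
lemma triMem_vert2 (a b c : ℝ × ℝ) : TriMem b a b c :=
  ⟨0, 1, 0, by norm_num, by norm_num, by norm_num, by norm_num, by
    simp [one_smul, zero_smul]⟩
lemma triMem_vert3 (a b c : ℝ × ℝ) : TriMem c a b c :=
  ⟨0, 0, 1, by norm_num, by norm_num, by norm_num, by norm_num, by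
    simp [one_smul, zero_smul]⟩

/-- The weights in a convex-combination representation are the barycentric
coordinates (nondegenerate case): first coordinate. -/
lemma triMem_coord1 {z a b c : ℝ × ℝ} {α β γ : ℝ} (h : α + β + γ = 1)
    (hz : z = α • a + β • b + γ • c) :
    det3 z b c = α * det3 a b c := by
  rw [hz, det3_combo3_fst b c a b c h, det3_aab, det3_aba c b]
  ring

lemma triMem_coord2 {z a b c : ℝ × ℝ} {α β γ : ℝ} (h : α + β + γ = 1)
    (hz : z = α • a + β • b + γ • c) :
    det3 a z c = β * det3 a b c := by
  rw [hz, det3_combo3_snd a c a b c h, det3_aab]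
  have h1 : det3 a c c = 0 := det3_abb a c
  rw [h1]
  ring

lemma triMem_coord3 {z a b c : ℝ × ℝ} {α β γ : ℝ} (h : α + β + γ = 1)
    (hz : z = α • a + β • b + γ • c) :
    det3 a b z = γ * det3 a b c := by
  rw [hz, det3_combo3 a b a b c h, det3_aba, det3_abb]
  ring

/-- Cross product of two vectors. -/
def cross2 (v w : ℝ × ℝ) : ℝ := v.1 * w.2 - v.2 * w.1

/-- Any three vectors in the plane are linearly dependent. -/
lemma dep3 (v1 v2 v3 : ℝ × ℝ) :
    ∃ c1 c2 c3 : ℝ, ¬(c1 = 0 ∧ c2 = 0 ∧ c3 = 0) ∧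
      c1 • v1 + c2 • v2 + c3 • v3 = 0 := by
  by_cases h12 : cross2 v1 v2 = 0
  · rcases eq_or_ne v1 0 with h1 | h1
    · exact ⟨1, 0, 0, by norm_num, by simp [h1]⟩
    · have hpar : ∃ t : ℝ, v2 = t • v1 := by
        by_cases hx : v1.1 = 0
        · have hy : v1.2 ≠ 0 := fun hy => h1 (Prod.ext hx hy)
          have h21 : v2.1 = 0 := by
            have : v1.1 * v2.2 - v1.2 * v2.1 = 0 := h12
            rw [hx] at this
            have : v1.2 * v2.1 = 0 := by linarith
            rcases mul_eq_zero.mp this with h | h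
            · exact absurd h hy
            · exact h
          refine ⟨v2.2 / v1.2, Prod.ext ?_ ?_⟩
          · rw [smul_fst, hx, h21]; ring
          · rw [smul_snd]; field_simp
        · have h22 : v2.2 = v1.2 * v2.1 / v1.1 := by
            have : v1.1 * v2.2 - v1.2 * v2.1 = 0 := h12
            field_simp
            linarith
          refine ⟨v2.1 / v1.1, Prod.ext ?_ ?_⟩
          · rw [smul_fst]; field_simp
          · rw [smul_snd, h22]; field_simp
      obtain ⟨t, ht⟩ := hpar
      refine ⟨t, -1, 0, by norm_num, ?_⟩
      rw [ht]
      apply Prod.ext <;>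
        simp only [Prod.fst_add, Prod.snd_add, smul_fst, smul_snd,
          Prod.fst_zero, Prod.snd_zero] <;> ring
  · refine ⟨cross2 v2 v3, -(cross2 v1 v3), cross2 v1 v2, ?_, ?_⟩
    · rintro ⟨-, -, h⟩; exact h12 h
    · apply Prod.ext <;>
      · simp only [cross2, Prod.fst_add, Prod.snd_add, smul_fst, smul_snd,
          Prod.fst_zero, Prod.snd_zero]
        ring

lemma radon_seg1 (q0 q1 q2 q3 : ℝ × ℝ) (d0 d1 d2 d3 : ℝ)
    (h0 : 0 ≤ d0) (h1 : 0 ≤ d1) (hM : 0 < d0 + d1) (h2 : d2 ≤ 0) (h3 : d3 ≤ 0)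
    (hsum : d0 + d1 + d2 + d3 = 0)
    (hx : d0 * q0.1 + d1 * q1.1 + d2 * q2.1 + d3 * q3.1 = 0)
    (hy : d0 * q0.2 + d1 * q1.2 + d2 * q2.2 + d3 * q3.2 = 0) :
    ∃ z, z ∈ segment ℝ q0 q1 ∩ segment ℝ q2 q3 := by
  have hMne : d0 + d1 ≠ 0 := ne_of_gt hM
  refine ⟨(d0 / (d0 + d1)) • q0 + (d1 / (d0 + d1)) • q1,
    ⟨d0 / (d0 + d1), d1 / (d0 + d1), div_nonneg h0 hM.le, div_nonneg h1 hM.le,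
      by rw [← add_div, div_self hMne], rfl⟩,
    ⟨-d2 / (d0 + d1), -d3 / (d0 + d1), div_nonneg (by linarith) hM.le,
      div_nonneg (by linarith) hM.le,
      by rw [← add_div, div_eq_one_iff_eq hMne]; linarith, ?_⟩⟩
  apply Prod.ext <;>
    · simp only [Prod.fst_add, Prod.snd_add, smul_fst, smul_snd]
      rw [div_mul_eq_mul_div, div_mul_eq_mul_div, div_mul_eq_mul_div,
        div_mul_eq_mul_div, ← add_div, ← add_div]
      congr 1
      linarith

lemma radon_tri1 (q0 q1 q2 q3 : ℝ × ℝ) (d0 d1 d2 d3 : ℝ)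
    (h0 : 0 < d0) (h1 : d1 ≤ 0) (h2 : d2 ≤ 0) (h3 : d3 ≤ 0)
    (hsum : d0 + d1 + d2 + d3 = 0)
    (hx : d0 * q0.1 + d1 * q1.1 + d2 * q2.1 + d3 * q3.1 = 0)
    (hy : d0 * q0.2 + d1 * q1.2 + d2 * q2.2 + d3 * q3.2 = 0) :
    TriMem q0 q1 q2 q3 := by
  have hd0 : d0 ≠ 0 := ne_of_gt h0
  refine ⟨-d1 / d0, -d2 / d0, -d3 / d0, div_nonneg (by linarith) h0.le,
    div_nonneg (by linarith) h0.le, div_nonneg (by linarith) h0.le,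
    by rw [← add_div, ← add_div, div_eq_one_iff_eq hd0]; linarith, ?_⟩
  apply Prod.ext <;>
    · simp only [Prod.fst_add, Prod.snd_add, smul_fst, smul_snd]
      rw [div_mul_eq_mul_div, div_mul_eq_mul_div, div_mul_eq_mul_div,
        ← add_div, ← add_div, eq_comm, div_eq_iff hd0]
      linarith

/-- Radon's theorem for four points in the plane, with explicit cases. -/
lemma radon4 (p0 p1 p2 p3 : ℝ × ℝ) :
    (∃ z, z ∈ segment ℝ p0 p1 ∩ segment ℝ p2 p3) ∨
    (∃ z, z ∈ segment ℝ p0 p2 ∩ segment ℝ p1 p3) ∨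
    (∃ z, z ∈ segment ℝ p0 p3 ∩ segment ℝ p1 p2) ∨
    TriMem p0 p1 p2 p3 ∨ TriMem p1 p0 p2 p3 ∨ TriMem p2 p0 p1 p3 ∨
    TriMem p3 p0 p1 p2 := by
  obtain ⟨c1, c2, c3, hnz, hdep⟩ := dep3 (p1 - p0) (p2 - p0) (p3 - p0)
  set c0 : ℝ := -(c1 + c2 + c3) with hc0
  have hsum : c0 + c1 + c2 + c3 = 0 := by rw [hc0]; ring
  have hX : c0 * p0.1 + c1 * p1.1 + c2 * p2.1 + c3 * p3.1 = 0 := by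
    have := congrArg Prod.fst hdep
    simp only [Prod.fst_add, Prod.fst_sub, smul_fst, Prod.fst_zero] at this
    rw [hc0]; ring_nf; ring_nf at this; linarith
  have hY : c0 * p0.2 + c1 * p1.2 + c2 * p2.2 + c3 * p3.2 = 0 := by
    have := congrArg Prod.snd hdep
    simp only [Prod.snd_add, Prod.snd_sub, smul_snd, Prod.snd_zero] at this
    rw [hc0]; ring_nf; ring_nf at this; linarith
  clear hdep hc0
  rcases lt_or_ge 0 c0 with s0 | s0 <;> rcases lt_or_ge 0 c1 with s1 | s1 <;>
    rcases lt_or_ge 0 c2 with s2 | s2 <;> rcases lt_or_ge 0 c3 with s3 | s3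
  · exfalso; linarith
  · exact Or.inr (Or.inr (Or.inr (Or.inr (Or.inr (Or.inr
      (radon_tri1 p3 p0 p1 p2 (-c3) (-c0) (-c1) (-c2) (by linarith) (by linarith)
        (by linarith) (by linarith) (by linarith) (by linarith) (by linarith)))))))
  · exact Or.inr (Or.inr (Or.inr (Or.inr (Or.inr (Or.inl
      (radon_tri1 p2 p0 p1 p3 (-c2) (-c0) (-c1) (-c3) (by linarith) (by linarith)
        (by linarith) (by linarith) (by linarith) (by linarith) (by linarith)))))))
  · exact Or.inl (radon_seg1 p0 p1 p2 p3 c0 c1 c2 c3 (by linarith) (by linarith)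
      (by linarith) s2 s3 hsum (by linarith) (by linarith))
  · exact Or.inr (Or.inr (Or.inr (Or.inr (Or.inl
      (radon_tri1 p1 p0 p2 p3 (-c1) (-c0) (-c2) (-c3) (by linarith) (by linarith)
        (by linarith) (by linarith) (by linarith) (by linarith) (by linarith))))))
  · exact Or.inr (Or.inl (radon_seg1 p0 p2 p1 p3 c0 c2 c1 c3 (by linarith)
      (by linarith) (by linarith) s1 s3 (by linarith) (by linarith) (by linarith)))
  · exact Or.inr (Or.inr (Or.inl (radon_seg1 p0 p3 p1 p2 c0 c3 c1 c2 (by linarith)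
      (by linarith) (by linarith) s1 s2 (by linarith) (by linarith) (by linarith))))
  · exact Or.inr (Or.inr (Or.inr (Or.inl
      (radon_tri1 p0 p1 p2 p3 c0 c1 c2 c3 s0 s1 s2 s3 hsum hX hY))))
  · exact Or.inr (Or.inr (Or.inr (Or.inl
      (radon_tri1 p0 p1 p2 p3 (-c0) (-c1) (-c2) (-c3) (by linarith) (by linarith)
        (by linarith) (by linarith) (by linarith) (by linarith) (by linarith)))))
  · obtain ⟨z, hz1, hz2⟩ := radon_seg1 p1 p2 p0 p3 c1 c2 c0 c3 (by linarith)
      (by linarith) (by linarith) s0 s3 (by linarith) (by linarith) (by linarith)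
    exact Or.inr (Or.inr (Or.inl ⟨z, hz2, hz1⟩))
  · obtain ⟨z, hz1, hz2⟩ := radon_seg1 p1 p3 p0 p2 c1 c3 c0 c2 (by linarith)
      (by linarith) (by linarith) s0 s2 (by linarith) (by linarith) (by linarith)
    exact Or.inr (Or.inl ⟨z, hz2, hz1⟩)
  · exact Or.inr (Or.inr (Or.inr (Or.inr (Or.inl
      (radon_tri1 p1 p0 p2 p3 c1 c0 c2 c3 s1 s0 s2 s3 (by linarith) (by linarith)
        (by linarith))))))
  · obtain ⟨z, hz1, hz2⟩ := radon_seg1 p2 p3 p0 p1 c2 c3 c0 c1 (by linarith)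
      (by linarith) (by linarith) s0 s1 (by linarith) (by linarith) (by linarith)
    exact Or.inl ⟨z, hz2, hz1⟩
  · exact Or.inr (Or.inr (Or.inr (Or.inr (Or.inr (Or.inl
      (radon_tri1 p2 p0 p1 p3 c2 c0 c1 c3 s2 s0 s1 s3 (by linarith) (by linarith)
        (by linarith)))))))
  · exact Or.inr (Or.inr (Or.inr (Or.inr (Or.inr (Or.inr
      (radon_tri1 p3 p0 p1 p2 c3 c0 c1 c2 s3 s0 s1 s2 (by linarith) (by linarith)
        (by linarith)))))))
  · exact absurd ⟨by linarith, by linarith, by linarith⟩ hnz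

lemma Lroot (ax bx cx am bm cm : ℝ) (hax : 0 < ax) (hbx : 0 < bx) (hcx : 0 < cx)
    (h : ¬(0 < am ∧ 0 < bm ∧ 0 < cm)) :
    ∃ t : ℝ, 0 ≤ t ∧ t ≤ 1 ∧
      (((1-t)*ax + t*am = 0 ∧ 0 ≤ (1-t)*bx + t*bm ∧ 0 ≤ (1-t)*cx + t*cm) ∨
       ((1-t)*bx + t*bm = 0 ∧ 0 ≤ (1-t)*ax + t*am ∧ 0 ≤ (1-t)*cx + t*cm) ∨
       ((1-t)*cx + t*cm = 0 ∧ 0 ≤ (1-t)*ax + t*am ∧ 0 ≤ (1-t)*bx + t*bm)) := by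
  have key : ∀ x m : ℝ, 0 < x → ∀ t : ℝ, 0 ≤ t → t ≤ 1 →
      t ≤ (if m ≤ 0 then x/(x-m) else 2) → 0 ≤ (1-t)*x + t*m := by
    intro x m hx t ht0 ht1 ht2
    by_cases hm : m ≤ 0
    · rw [if_pos hm] at ht2
      have hxm : 0 < x - m := by linarith
      have := (le_div_iff₀ hxm).mp ht2
      nlinarith
    · push_neg at hm
      nlinarith [mul_nonneg ht0 hm.le, mul_nonneg (by linarith : (0:ℝ) ≤ 1 - t) hx.le]
  have zero : ∀ x m : ℝ, 0 < x → m ≤ 0 → (1 - x/(x-m))*x + (x/(x-m))*m = 0 := by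
    intro x m hx hm
    have hxm : x - m ≠ 0 := by intro hc; nlinarith
    field_simp
    ring
  have one : ∀ x m : ℝ, 0 < x → m ≤ 0 → x/(x-m) ≤ 1 := by
    intro x m hx hm
    rw [div_le_one (by linarith)]
    linarith
  set ta := if am ≤ 0 then ax/(ax-am) else 2 with hta
  set tb := if bm ≤ 0 then bx/(bx-bm) else 2 with htb
  set tc := if cm ≤ 0 then cx/(cx-cm) else 2 with htc
  have pos : ∀ x m : ℝ, 0 < x → 0 < (if m ≤ 0 then x/(x-m) else 2) := by
    intro x m hx
    split
    · apply div_pos hx; linarith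
    · norm_num
  have hta0 : 0 < ta := pos ax am hax
  have htb0 : 0 < tb := pos bx bm hbx
  have htc0 : 0 < tc := pos cx cm hcx
  have ht0 : 0 ≤ min ta (min tb tc) := le_of_lt (lt_min hta0 (lt_min htb0 htc0))
  have hbnd : ∀ u : ℝ, 0 ≤ u → u ≤ 1 → u ≤ ta → u ≤ tb → u ≤ tc →
      (0 ≤ (1-u)*ax + u*am ∧ 0 ≤ (1-u)*bx + u*bm ∧ 0 ≤ (1-u)*cx + u*cm) := by
    intro u h0 h1 h2 h3 h4
    refine ⟨key ax am hax u h0 h1 ?_, key bx bm hbx u h0 h1 ?_, key cx cm hcx u h0 h1 ?_⟩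
    · rw [← hta]; exact h2
    · rw [← htb]; exact h3
    · rw [← htc]; exact h4
  have ht1 : min ta (min tb tc) ≤ 1 := by
    push_neg at h
    by_cases h1 : am ≤ 0
    · calc min ta (min tb tc) ≤ ta := min_le_left _ _
        _ = ax/(ax-am) := by rw [hta, if_pos h1]
        _ ≤ 1 := one ax am hax h1
    · by_cases h2 : bm ≤ 0
      · calc min ta (min tb tc) ≤ tb := le_trans (min_le_right _ _) (min_le_left _ _)
          _ = bx/(bx-bm) := by rw [htb, if_pos h2]
          _ ≤ 1 := one bx bm hbx h2
      · push_neg at h1 h2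
        have h3 : cm ≤ 0 := h h1 h2
        calc min ta (min tb tc) ≤ tc :=
            le_trans (min_le_right _ _) (min_le_right _ _)
          _ = cx/(cx-cm) := by rw [htc, if_pos h3]
          _ ≤ 1 := one cx cm hcx h3
  refine ⟨min ta (min tb tc), ht0, ht1, ?_⟩
  obtain ⟨hga, hgb, hgc⟩ := hbnd (min ta (min tb tc)) ht0 ht1 (min_le_left _ _)
    (le_trans (min_le_right _ _) (min_le_left _ _))
    (le_trans (min_le_right _ _) (min_le_right _ _))
  rcases min_cases ta (min tb tc) with ⟨heq, -⟩ | ⟨heq, -⟩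
  · have ham : am ≤ 0 := by
      by_contra hc
      have h2 : ta = 2 := hta.trans (if_neg hc)
      rw [heq, h2] at ht1
      norm_num at ht1
    refine Or.inl ⟨?_, hgb, hgc⟩
    rw [heq, hta, if_pos ham]
    exact zero ax am hax ham
  · rcases min_cases tb tc with ⟨heq2, -⟩ | ⟨heq2, -⟩
    · replace heq := heq.trans heq2
      have hbm : bm ≤ 0 := by
        by_contra hc
        have h2 : tb = 2 := htb.trans (if_neg hc)
        rw [heq, h2] at ht1
        norm_num at ht1
      refine Or.inr (Or.inl ⟨?_, hga, hgc⟩)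
      rw [heq, htb, if_pos hbm]
      exact zero bx bm hbx hbm
    · replace heq := heq.trans heq2
      have hcm : cm ≤ 0 := by
        by_contra hc
        have h2 : tc = 2 := htc.trans (if_neg hc)
        rw [heq, h2] at ht1
        norm_num at ht1
      refine Or.inr (Or.inr ⟨?_, hga, hgb⟩)
      rw [heq, htc, if_pos hcm]
      exact zero cx cm hcx hcm

lemma det3_combo2_fst (a b x y : ℝ × ℝ) {α β : ℝ} (h : α + β = 1) :
    det3 (α • x + β • y) a b = α * det3 x a b + β * det3 y a b := by
  have hβ : β = 1 - α := by linarith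
  subst hβ
  simp only [det3, Prod.fst_add, Prod.snd_add, smul_fst, smul_snd]
  ring

lemma det3_combo2_snd (a b x y : ℝ × ℝ) {α β : ℝ} (h : α + β = 1) :
    det3 a (α • x + β • y) b = α * det3 a x b + β * det3 a y b := by
  have hβ : β = 1 - α := by linarith
  subst hβ
  simp only [det3, Prod.fst_add, Prod.snd_add, smul_fst, smul_snd]
  ring

/-- A vertex of a nondegenerate triangle cannot be strictly inside a triangle
whose vertices belong to the closed triangle. -/
lemma lemV (P1 P2 P3 y1 y2 y3 : ℝ × ℝ) (hd : det3 P1 P2 P3 ≠ 0)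
    (h1 : TriMem y1 P1 P2 P3) (h2 : TriMem y2 P1 P2 P3) (h3 : TriMem y3 P1 P2 P3)
    (hs : StrictIn P1 y1 y2 y3) : False := by
  have key : ∀ y : ℝ × ℝ, TriMem y P1 P2 P3 →
      ∃ u : ℝ, 0 ≤ u ∧ u ≤ 1 ∧ det3 P2 P3 y = u * det3 P1 P2 P3 ∧
        (u = 1 → y = P1) := by
    rintro y ⟨u, v, w, hu, hv, hw, hsum, hrep⟩
    refine ⟨u, hu, by linarith, ?_, ?_⟩
    · rw [hrep, det3_combo3 P2 P3 P1 P2 P3 hsum, det3_aba, det3_abb,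
        ← det3_cyc P1 P2 P3]
      ring
    · intro hu1
      have hv0 : v = 0 := by linarith
      have hw0 : w = 0 := by linarith
      rw [hrep, hu1, hv0, hw0]
      simp
  obtain ⟨u1, hu1a, hu1b, hu1c, hu1d⟩ := key y1 h1
  obtain ⟨u2, hu2a, hu2b, hu2c, hu2d⟩ := key y2 h2
  obtain ⟨u3, hu3a, hu3b, hu3c, hu3d⟩ := key y3 h3
  obtain ⟨hdy, w1, w2, w3, hw1, hw2, hw3, hwsum, hwrep⟩ := hs
  have hfP1 : det3 P2 P3 P1 = det3 P1 P2 P3 := (det3_cyc P1 P2 P3).symm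
  have hcomb : det3 P2 P3 P1 =
      w1 * det3 P2 P3 y1 + w2 * det3 P2 P3 y2 + w3 * det3 P2 P3 y3 := by
    conv_lhs => rw [hwrep]
    exact det3_combo3 P2 P3 y1 y2 y3 hwsum
  rw [hfP1, hu1c, hu2c, hu3c] at hcomb
  have hd1 : w1 * u1 + w2 * u2 + w3 * u3 = 1 := by
    have h := sub_eq_zero.mpr hcomb
    have : (1 - (w1 * u1 + w2 * u2 + w3 * u3)) * det3 P1 P2 P3 = 0 := by
      linarith [h]
    rcases mul_eq_zero.mp this with h' | h'
    · linarith
    · exact absurd h' hd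
  have hu1e : u1 = 1 := by nlinarith
  have hu2e : u2 = 1 := by nlinarith
  have hu3e : u3 = 1 := by nlinarith
  rw [hu1d hu1e, hu2d hu2e, hu3d hu3e] at hdy
  exact hdy (det3_aab P1 P1)

/-- Collinear points admit an affine parametrisation. -/
lemma collinear_param (x y q : ℝ × ℝ) (hxy : x ≠ y) (h0 : det3 x y q = 0) :
    ∃ t : ℝ, q = (1-t) • x + t • y := by
  have key : (y.1 - x.1) * (q.2 - x.2) = (y.2 - x.2) * (q.1 - x.1) := by
    simp only [det3] at h0
    linarith
  by_cases hx1 : y.1 - x.1 = 0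
  · have hx2 : y.2 - x.2 ≠ 0 := by
      intro hc
      exact hxy (Prod.ext (by linarith) (by linarith))
    refine ⟨(q.2 - x.2)/(y.2 - x.2), Prod.ext ?_ ?_⟩
    · simp only [Prod.fst_add, smul_fst]
      have hq1 : q.1 = x.1 := by
        have h2 : (y.2 - x.2) * (q.1 - x.1) = 0 := by rw [← key, hx1]; ring
        rcases mul_eq_zero.mp h2 with h | h
        · exact absurd h hx2
        · linarith
      have hy1 : y.1 = x.1 := by linarith
      rw [hq1, hy1]
      ring
    · simp only [Prod.snd_add, smul_snd]
      field_simp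
      ring
  · refine ⟨(q.1 - x.1)/(y.1 - x.1), Prod.ext ?_ ?_⟩
    · simp only [Prod.fst_add, smul_fst]
      field_simp
      ring
    · simp only [Prod.snd_add, smul_snd]
      field_simp
      linear_combination key

section Frame

variable {V : Type*} {G : SimpleGraph V} {S : Set V} {D : V → ℝ × ℝ}

/-- Two visible vertex-disjoint edges cannot share a point. -/
lemma cross_contra (hF : IsPlanarSLFrame G S D) {u v x y : V}
    (huv : G.Adj u v) (hxy : G.Adj x y)
    (hu : u ∈ S) (hv : v ∈ S) (hx : x ∈ S) (hy : y ∈ S)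
    (hux : u ≠ x) (huy : u ≠ y) (hvx : v ≠ x) (hvy : v ≠ y)
    {p : ℝ × ℝ} (hp1 : p ∈ segment ℝ (D u) (D v))
    (hp2 : p ∈ segment ℝ (D x) (D y)) : False := by
  obtain ⟨z, hz1, hz2, -⟩ := hF.2.2 u v x y huv hxy hu hv hx hy
    (by rintro (⟨rfl, rfl⟩ | ⟨rfl, rfl⟩) <;> simp_all) p ⟨hp1, hp2⟩
  rcases hz1 with rfl | rfl <;> exact hz2.elim (by intro h; simp_all) (by intro h; simp_all)

lemma inj2 (hF : IsPlanarSLFrame G S D) {u v : V} (hu : u ∈ S) (hv : v ∈ S)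
    (huv : u ≠ v) : D u ≠ D v := fun h => huv (hF.1 hu hv h)

/-- A visible vertex is not collinear with a visible edge whose two endpoints
it is adjacent to. -/
lemma not_collinear (hF : IsPlanarSLFrame G S D) {x y q : V}
    (hxy : G.Adj x y) (hxq : G.Adj x q) (hyq : G.Adj y q)
    (hx : x ∈ S) (hy : y ∈ S) (hq : q ∈ S) :
    det3 (D x) (D y) (D q) ≠ 0 := by
  intro h0
  have hxyV : x ≠ y := hxy.ne
  have hxqV : x ≠ q := hxq.ne
  have hyqV : y ≠ q := hyq.ne
  obtain ⟨t, ht⟩ := collinear_param (D x) (D y) (D q) (inj2 hF hx hy hxyV) h0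
  rcases lt_trichotomy t 0 with h | h | h
  · -- x strictly between q and y
    have h1t : (0:ℝ) < 1 - t := by linarith
    refine hF.2.1 q y x hyq.symm hq hy hx hxqV hxyV ?_
    refine ⟨1/(1-t), -t/(1-t), div_pos one_pos h1t, div_pos (by linarith) h1t, ?_, ?_⟩
    · rw [← add_div, div_eq_one_iff_eq (ne_of_gt h1t)]
      ring
    · rw [ht]
      apply Prod.ext <;>
        · simp only [Prod.fst_add, Prod.snd_add, smul_fst, smul_snd]
          field_simp
          try ring
  · -- t = 0 : q = x
    subst h
    rw [show ((1:ℝ)-0) • D x + (0:ℝ) • D y = D x by simp] at ht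
    exact hxqV (hF.1 hx hq ht.symm)
  · rcases lt_trichotomy t 1 with h1 | h1 | h1
    · -- q strictly between x and y
      refine hF.2.1 x y q hxy hx hy hq hxqV.symm hyqV.symm ⟨1-t, t, by linarith, h, by ring, ht.symm⟩
    · -- t = 1 : q = y
      subst h1
      rw [show ((1:ℝ)-1) • D x + (1:ℝ) • D y = D y by simp] at ht
      exact hyqV (hF.1 hy hq ht.symm)
    · -- y strictly between x and q
      have ht0 : (0:ℝ) < t := by linarith
      refine hF.2.1 x q y hxq hx hq hy hxyV.symm hyqV ?_
      refine ⟨1 - 1/t, 1/t, by rw [sub_pos, div_lt_one ht0]; linarith, by positivity, by ring, ?_⟩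
      rw [ht]
      apply Prod.ext <;>
        · simp only [Prod.fst_add, Prod.snd_add, smul_fst, smul_snd]
          field_simp
          ring
/-- A visible vertex lying in the closed triangle on three visible, pairwise
adjacent vertices (none equal to it) lies strictly inside it. -/
lemma upgrade (hF : IsPlanarSLFrame G S D) {x y z p : V}
    (hxy : G.Adj x y) (hyz : G.Adj y z) (hxz : G.Adj x z)
    (hx : x ∈ S) (hy : y ∈ S) (hz : z ∈ S) (hp : p ∈ S)
    (hpx : p ≠ x) (hpy : p ≠ y) (hpz : p ≠ z)
    (hT : TriMem (D p) (D x) (D y) (D z)) :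
    StrictIn (D p) (D x) (D y) (D z) := by
  have hd : det3 (D x) (D y) (D z) ≠ 0 := not_collinear hF hxy hxz hyz hx hy hz
  obtain ⟨α, β, γ, h1, h2, h3, h4, h5⟩ := hT
  refine ⟨hd, α, β, γ, ?_, ?_, ?_, h4, h5⟩
  · rcases h1.eq_or_lt with h | h
    · exfalso
      rw [← h, zero_smul, zero_add] at h5
      rcases h2.eq_or_lt with hb | hb
      · rw [← hb, zero_smul, zero_add] at h5
        rw [show γ = 1 by linarith, one_smul] at h5
        exact hpz (hF.1 hp hz h5)
      · rcases h3.eq_or_lt with hc | hc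
        · rw [← hc, zero_smul, add_zero] at h5
          rw [show β = 1 by linarith, one_smul] at h5
          exact hpy (hF.1 hp hy h5)
        · exact hF.2.1 y z p hyz hy hz hp hpy hpz ⟨β, γ, hb, hc, by linarith, h5.symm⟩
    · exact h
  · rcases h2.eq_or_lt with h | h
    · exfalso
      rw [← h, zero_smul, add_zero] at h5
      rcases h1.eq_or_lt with hb | hb
      · rw [← hb, zero_smul, zero_add] at h5
        rw [show γ = 1 by linarith, one_smul] at h5
        exact hpz (hF.1 hp hz h5)
      · rcases h3.eq_or_lt with hc | hc
        · rw [← hc, zero_smul, add_zero] at h5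
          rw [show α = 1 by linarith, one_smul] at h5
          exact hpx (hF.1 hp hx h5)
        · exact hF.2.1 x z p hxz hx hz hp hpx hpz ⟨α, γ, hb, hc, by linarith, h5.symm⟩
    · exact h
  · rcases h3.eq_or_lt with h | h
    · exfalso
      rw [← h, zero_smul, add_zero] at h5
      rcases h1.eq_or_lt with hb | hb
      · rw [← hb, zero_smul, zero_add] at h5
        rw [show β = 1 by linarith, one_smul] at h5
        exact hpy (hF.1 hp hy h5)
      · rcases h2.eq_or_lt with hc | hc
        · rw [← hc, zero_smul, add_zero] at h5
          rw [show α = 1 by linarith, one_smul] at h5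
          exact hpx (hF.1 hp hx h5)
        · exact hF.2.1 x y p hxy hx hy hp hpx hpy ⟨α, β, hb, hc, by linarith, h5.symm⟩
    · exact h

/-- Propagation: a visible neighbour of a vertex strictly inside a visible
edge-triangle is also strictly inside it. -/
lemma propagate (hF : IsPlanarSLFrame G S D) {a b c x m : V}
    (hab : G.Adj a b) (hbc : G.Adj b c) (hac : G.Adj a c) (hxm : G.Adj x m)
    (ha : a ∈ S) (hb : b ∈ S) (hc : c ∈ S) (hx : x ∈ S) (hm : m ∈ S)
    (hxa : x ≠ a) (hxb : x ≠ b) (hxc : x ≠ c)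
    (hma : m ≠ a) (hmb : m ≠ b) (hmc : m ≠ c)
    (hs : StrictIn (D x) (D a) (D b) (D c)) :
    StrictIn (D m) (D a) (D b) (D c) := by
  obtain ⟨hd, α, β, γ, hα, hβ, hγ, hsum, hrep⟩ := hs
  set d := det3 (D a) (D b) (D c) with hddef
  set A := det3 (D m) (D b) (D c) / d with hA
  set B := det3 (D a) (D m) (D c) / d with hB
  set C := det3 (D a) (D b) (D m) / d with hC
  have hABC : A + B + C = 1 := by
    rw [hA, hB, hC, ← add_div, ← add_div, div_eq_one_iff_eq hd]
    exact bary_sum (D a) (D b) (D c) (D m)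
  have hbaryM : D m = A • D a + B • D b + C • D c := bary (D a) (D b) (D c) (D m) hd
  by_cases hall : 0 < A ∧ 0 < B ∧ 0 < C
  · exact ⟨hd, A, B, C, hall.1, hall.2.1, hall.2.2, hABC, hbaryM⟩
  exfalso
  obtain ⟨t, ht0, ht1, hcase⟩ := Lroot α β γ A B C hα hβ hγ hall
  set P := (1-t) • D x + t • D m with hP
  have hPseg : P ∈ segment ℝ (D x) (D m) := ⟨1-t, t, by linarith, ht0, by ring, rfl⟩
  -- coordinates of P
  have hcoord1 : det3 P (D b) (D c) = ((1-t)*α + t*A) * d := by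
    rw [hP, det3_combo2_fst (D b) (D c) (D x) (D m) (by ring : (1-t) + t = 1)]
    rw [triMem_coord1 hsum hrep, hA, ← hddef]
    field_simp
  have hcoord2 : det3 (D a) P (D c) = ((1-t)*β + t*B) * d := by
    rw [hP, det3_combo2_snd (D a) (D c) (D x) (D m) (by ring : (1-t) + t = 1)]
    rw [triMem_coord2 hsum hrep, hB, ← hddef]
    field_simp
  have hcoord3 : det3 (D a) (D b) P = ((1-t)*γ + t*C) * d := by
    rw [hP, det3_combo2 (D a) (D b) (D x) (D m) (by ring : (1-t) + t = 1)]
    rw [triMem_coord3 hsum hrep, hC, ← hddef]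
    field_simp
  have hbaryP : P = (det3 P (D b) (D c) / d) • D a + (det3 (D a) P (D c) / d) • D b +
      (det3 (D a) (D b) P / d) • D c := bary (D a) (D b) (D c) P hd
  have hPsum : det3 P (D b) (D c) / d + det3 (D a) P (D c) / d +
      det3 (D a) (D b) P / d = 1 := by
    rw [← add_div, ← add_div, div_eq_one_iff_eq hd]
    exact bary_sum (D a) (D b) (D c) P
  rcases hcase with ⟨hz, hn2, hn3⟩ | ⟨hz, hn1, hn3⟩ | ⟨hz, hn1, hn2⟩
  · -- P on the side b-c
    have hw1 : det3 P (D b) (D c) / d = 0 := by rw [hcoord1, hz, zero_mul, zero_div]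
    have hPbc : P ∈ segment ℝ (D b) (D c) := by
      refine ⟨det3 (D a) P (D c) / d, det3 (D a) (D b) P / d, ?_, ?_, by linarith, ?_⟩
      · rw [hcoord2, mul_div_assoc, div_self hd, mul_one]; exact hn2
      · rw [hcoord3, mul_div_assoc, div_self hd, mul_one]; exact hn3
      · rw [hw1, zero_smul, zero_add] at hbaryP
        exact hbaryP.symm
    exact cross_contra hF hxm hbc hx hm hb hc hxb hxc hmb hmc hPseg hPbc
  · -- P on the side a-c
    have hw2 : det3 (D a) P (D c) / d = 0 := by rw [hcoord2, hz, zero_mul, zero_div]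
    have hPac : P ∈ segment ℝ (D a) (D c) := by
      refine ⟨det3 P (D b) (D c) / d, det3 (D a) (D b) P / d, ?_, ?_, by linarith, ?_⟩
      · rw [hcoord1, mul_div_assoc, div_self hd, mul_one]; exact hn1
      · rw [hcoord3, mul_div_assoc, div_self hd, mul_one]; exact hn3
      · rw [hw2, zero_smul, add_zero] at hbaryP
        exact hbaryP.symm
    exact cross_contra hF hxm hac hx hm ha hc hxa hxc hma hmc hPseg hPac
  · -- P on the side a-b
    have hw3 : det3 (D a) (D b) P / d = 0 := by rw [hcoord3, hz, zero_mul, zero_div]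
    have hPab : P ∈ segment ℝ (D a) (D b) := by
      refine ⟨det3 P (D b) (D c) / d, det3 (D a) P (D c) / d, ?_, ?_, by linarith, ?_⟩
      · rw [hcoord1, mul_div_assoc, div_self hd, mul_one]; exact hn1
      · rw [hcoord2, mul_div_assoc, div_self hd, mul_one]; exact hn2
      · rw [hw3, zero_smul, add_zero] at hbaryP
        exact hbaryP.symm
    exact cross_contra hF hxm hab hx hm ha hb hxa hxb hma hmb hPseg hPab

lemma samesign_zero {fq fq' a b : ℝ} (h : 0 < fq * fq') (ha : 0 ≤ a) (hb : 0 ≤ b)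
    (hz : a * fq + b * fq' = 0) : a = 0 ∧ b = 0 := by
  rcases mul_pos_iff.mp h with ⟨h1, h2⟩ | ⟨h1, h2⟩
  · constructor
    · by_contra hc
      have ha' : 0 < a := lt_of_le_of_ne ha (Ne.symm hc)
      nlinarith [mul_pos ha' h1, mul_nonneg hb h2.le]
    · by_contra hc
      have hb' : 0 < b := lt_of_le_of_ne hb (Ne.symm hc)
      nlinarith [mul_pos hb' h2, mul_nonneg ha h1.le]
  · constructor
    · by_contra hc
      have ha' : 0 < a := lt_of_le_of_ne ha (Ne.symm hc)
      nlinarith [mul_pos_of_neg_of_neg (neg_neg_iff_pos.mpr ha') h1,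
        mul_nonpos_of_nonneg_of_nonpos hb h2.le]
    · by_contra hc
      have hb' : 0 < b := lt_of_le_of_ne hb (Ne.symm hc)
      nlinarith

/-- Dichotomy for two apexes on the same side of a visible base edge. -/
lemma D_dichotomy (hF : IsPlanarSLFrame G S D) {x y q q' : V}
    (hxy : G.Adj x y) (hqx : G.Adj q x) (hqy : G.Adj q y)
    (hq'x : G.Adj q' x) (hq'y : G.Adj q' y)
    (hx : x ∈ S) (hy : y ∈ S) (hq : q ∈ S) (hq' : q' ∈ S) (hqq' : q ≠ q')
    (hside : 0 < det3 (D x) (D y) (D q) * det3 (D x) (D y) (D q')) :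
    StrictIn (D q') (D x) (D y) (D q) ∨ StrictIn (D q) (D x) (D y) (D q') := by
  rcases radon4 (D x) (D y) (D q) (D q') with
    ⟨z, hz1, hz2⟩ | ⟨z, hz1, hz2⟩ | ⟨z, hz1, hz2⟩ | hT | hT | hT | hT
  · -- void by same-side
    exfalso
    obtain ⟨a', b', ha', hb', hab', hzeq'⟩ := hz1
    obtain ⟨a, b, ha, hb, hab, hzeq⟩ := hz2
    have hfz0 : det3 (D x) (D y) z = 0 := by
      rw [← hzeq', det3_combo2 (D x) (D y) (D x) (D y) hab', det3_aba, det3_abb]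
      ring
    have hfz : det3 (D x) (D y) z =
        a * det3 (D x) (D y) (D q) + b * det3 (D x) (D y) (D q') := by
      rw [← hzeq, det3_combo2 (D x) (D y) (D q) (D q') hab]
    obtain ⟨ha0, hb0⟩ := samesign_zero hside ha hb (by rw [← hfz, hfz0])
    rw [ha0, hb0] at hab
    norm_num at hab
  · exact (cross_contra hF hqx.symm hq'y.symm hx hq hy hq'
      hxy.ne hq'x.ne.symm hqy.ne hqq' hz1 hz2).elim
  · exact (cross_contra hF hq'x.symm hqy.symm hx hq' hy hq
      hxy.ne hqx.ne.symm hq'y.ne (Ne.symm hqq') hz1 hz2).elim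
  · -- x in hull(y,q,q') : impossible
    exfalso
    obtain ⟨α, β, γ, hα, hβ, hγ, hsum, hrep⟩ := hT
    have h0 : α * det3 (D x) (D y) (D y) + β * det3 (D x) (D y) (D q) +
        γ * det3 (D x) (D y) (D q') = 0 := by
      rw [← det3_combo3 (D x) (D y) (D y) (D q) (D q') hsum, ← hrep, det3_aba]
    rw [det3_abb] at h0
    obtain ⟨hβ0, hγ0⟩ := samesign_zero hside hβ hγ (by linarith)
    rw [hβ0, hγ0] at hsum hrep
    rw [show α = 1 by linarith] at hrep
    simp only [one_smul, zero_smul, add_zero] at hrep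
    exact hxy.ne (hF.1 hx hy hrep)
  · -- y in hull(x,q,q') : impossible
    exfalso
    obtain ⟨α, β, γ, hα, hβ, hγ, hsum, hrep⟩ := hT
    have h0 : α * det3 (D x) (D y) (D x) + β * det3 (D x) (D y) (D q) +
        γ * det3 (D x) (D y) (D q') = 0 := by
      rw [← det3_combo3 (D x) (D y) (D x) (D q) (D q') hsum, ← hrep, det3_abb]
    rw [det3_aba] at h0
    obtain ⟨hβ0, hγ0⟩ := samesign_zero hside hβ hγ (by linarith)
    rw [hβ0, hγ0] at hsum hrep
    rw [show α = 1 by linarith] at hrep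
    simp only [one_smul, zero_smul, add_zero] at hrep
    exact hxy.ne (hF.1 hx hy hrep.symm)
  · -- q in hull(x,y,q')
    exact Or.inr (upgrade hF hxy hq'y.symm hq'x.symm hx hy hq' hq
      hqx.ne hqy.ne hqq' hT)
  · -- q' in hull(x,y,q)
    exact Or.inl (upgrade hF hxy hqy.symm hqx.symm hx hy hq hq'
      hq'x.ne hq'y.ne (Ne.symm hqq') hT)

lemma comm3 {α β γ : ℝ} (a b c : ℝ × ℝ) :
    α • a + β • b + γ • c = γ • c + α • a + β • b := by
  apply Prod.ext <;>
    simp only [Prod.fst_add, Prod.snd_add, smul_fst, smul_snd] <;> ring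

lemma triMem_rot {z a b c : ℝ × ℝ} (h : TriMem z a b c) : TriMem z c a b := by
  obtain ⟨α, β, γ, h1, h2, h3, h4, h5⟩ := h
  exact ⟨γ, α, β, h3, h1, h2, by linarith, by rw [h5, comm3]⟩

lemma claim2_aux (hF : IsPlanarSLFrame G S D) {u v w q q' : V}
    (huv : G.Adj u v) (hvw : G.Adj v w)
    (hqu : G.Adj q u) (hqv : G.Adj q v) (hqw : G.Adj q w)
    (hq'u : G.Adj q' u) (hq'v : G.Adj q' v) (hq'w : G.Adj q' w)
    (hu : u ∈ S) (hv : v ∈ S) (hw : w ∈ S) (hq : q ∈ S) (hq' : q' ∈ S)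
    (huw : u ≠ w) (hqq' : q ≠ q')
    (hside2 : 0 < det3 (D v) (D w) (D q) * det3 (D v) (D w) (D q'))
    (hmain : StrictIn (D q') (D u) (D v) (D q)) : False := by
  have hw_in : StrictIn (D w) (D u) (D v) (D q) :=
    propagate hF huv hqv.symm hqu.symm hq'w hu hv hq hq' hw
      hq'u.ne hq'v.ne (Ne.symm hqq') (Ne.symm huw) hvw.ne.symm hqw.ne.symm hmain
  rcases D_dichotomy hF hvw hqv hqw hq'v hq'w hv hw hq hq' hqq' hside2 with hL | hR
  · have hu_in : StrictIn (D u) (D v) (D w) (D q) :=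
      propagate hF hvw hqw.symm hqv.symm hq'u hv hw hq hq' hu
        hq'v.ne hq'w.ne (Ne.symm hqq') huv.ne huw hqu.ne.symm hL
    exact lemV (D u) (D v) (D q) (D v) (D w) (D q) hmain.1
      (triMem_vert2 _ _ _) hw_in.triMem (triMem_vert3 _ _ _) hu_in
  · have hd' : det3 (D q) (D u) (D v) ≠ 0 := by
      rw [det3_cyc]; exact hmain.1
    exact lemV (D q) (D u) (D v) (D v) (D w) (D q') hd'
      (triMem_vert3 _ _ _) (triMem_rot hw_in.triMem) (triMem_rot hmain.triMem) hR

/-- Two apexes of a visible path cannot lie strictly on the same side of both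
path edges. -/
lemma claim2 (hF : IsPlanarSLFrame G S D) {u v w q q' : V}
    (huv : G.Adj u v) (hvw : G.Adj v w)
    (hqu : G.Adj q u) (hqv : G.Adj q v) (hqw : G.Adj q w)
    (hq'u : G.Adj q' u) (hq'v : G.Adj q' v) (hq'w : G.Adj q' w)
    (hu : u ∈ S) (hv : v ∈ S) (hw : w ∈ S) (hq : q ∈ S) (hq' : q' ∈ S)
    (huw : u ≠ w) (hqq' : q ≠ q')
    (hside1 : 0 < det3 (D u) (D v) (D q) * det3 (D u) (D v) (D q'))
    (hside2 : 0 < det3 (D v) (D w) (D q) * det3 (D v) (D w) (D q')) : False := by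
  rcases D_dichotomy hF huv hqu hqv hq'u hq'v hu hv hq hq' hqq' hside1 with hL | hR
  · exact claim2_aux hF huv hvw hqu hqv hqw hq'u hq'v hq'w hu hv hw hq hq'
      huw hqq' hside2 hL
  · exact claim2_aux hF huv hvw hq'u hq'v hq'w hqu hqv hqw hu hv hw hq' hq
      huw (Ne.symm hqq') (by rw [mul_comm]; exact hside2) hR

/-- Radon for a visible `K₄`: one vertex is strictly inside the triangle on
the other three. -/
lemma k4_cases (hF : IsPlanarSLFrame G S D) {p q r s : V}
    (hpq : G.Adj p q) (hpr : G.Adj p r) (hps : G.Adj p s)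
    (hqr : G.Adj q r) (hqs : G.Adj q s) (hrs : G.Adj r s)
    (hp : p ∈ S) (hq : q ∈ S) (hr : r ∈ S) (hs : s ∈ S) :
    StrictIn (D p) (D q) (D r) (D s) ∨ StrictIn (D q) (D p) (D r) (D s) ∨
    StrictIn (D r) (D p) (D q) (D s) ∨ StrictIn (D s) (D p) (D q) (D r) := by
  rcases radon4 (D p) (D q) (D r) (D s) with
    ⟨z, hz1, hz2⟩ | ⟨z, hz1, hz2⟩ | ⟨z, hz1, hz2⟩ | hT | hT | hT | hT
  · exact (cross_contra hF hpq hrs hp hq hr hs hpr.ne hps.ne hqr.ne hqs.ne hz1 hz2).elim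
  · exact (cross_contra hF hpr hqs hp hr hq hs hpq.ne hps.ne hqr.ne.symm hrs.ne hz1 hz2).elim
  · exact (cross_contra hF hps hqr hp hs hq hr hpq.ne hpr.ne hqs.ne.symm hrs.ne.symm hz1 hz2).elim
  · exact Or.inl (upgrade hF hqr hrs hqs hq hr hs hp hpq.ne hpr.ne hps.ne hT)
  · exact Or.inr (Or.inl (upgrade hF hpr hrs hps hp hr hs hq hpq.ne.symm hqr.ne hqs.ne hT))
  · exact Or.inr (Or.inr (Or.inl (upgrade hF hpq hqs hps hp hq hs hr
      hpr.ne.symm hqr.ne.symm hrs.ne hT)))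
  · exact Or.inr (Or.inr (Or.inr (upgrade hF hpq hqr hpr hp hq hr hs
      hps.ne.symm hqs.ne.symm hrs.ne.symm hT)))

/-- `lemV`, with the special vertex allowed to be any of the three. -/
lemma lemV' (D1 D2 D3 y1 y2 y3 X : ℝ × ℝ) (hd : det3 D1 D2 D3 ≠ 0)
    (h1 : TriMem y1 D1 D2 D3) (h2 : TriMem y2 D1 D2 D3) (h3 : TriMem y3 D1 D2 D3)
    (hs : StrictIn X y1 y2 y3) (hX : X = D1 ∨ X = D2 ∨ X = D3) : False := by
  rcases hX with rfl | rfl | rfl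
  · exact lemV X D2 D3 y1 y2 y3 hd h1 h2 h3 hs
  · refine lemV X D3 D1 y1 y2 y3 ?_ (triMem_rot (triMem_rot h1))
      (triMem_rot (triMem_rot h2)) (triMem_rot (triMem_rot h3)) hs
    rw [← det3_cyc]; exact hd
  · refine lemV X D1 D2 y1 y2 y3 ?_ (triMem_rot h1) (triMem_rot h2)
      (triMem_rot h3) hs
    rw [det3_cyc]; exact hd

lemma ff2_inner (hF : IsPlanarSLFrame G S D) {Q R Q' B1 B2 As : V}
    (hQR : G.Adj Q R) (hQB1 : G.Adj Q B1) (hQB2 : G.Adj Q B2)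
    (hRB1 : G.Adj R B1) (hRB2 : G.Adj R B2) (hB : G.Adj B1 B2)
    (hPB1 : G.Adj Q' B1) (hPB2 : G.Adj Q' B2)
    (hQA : G.Adj Q As) (hRA : G.Adj R As) (hPA : G.Adj Q' As)
    (hPQ : Q' ≠ Q) (hPR : Q' ≠ R) (hAB1 : As ≠ B1) (hAB2 : As ≠ B2)
    (hmQ : Q ∈ S) (hmR : R ∈ S) (hmP : Q' ∈ S) (hmB1 : B1 ∈ S) (hmB2 : B2 ∈ S)
    (hmA : As ∈ S)
    (Δ1 Δ2 Δ3 : ℝ × ℝ) (hΔd : det3 Δ1 Δ2 Δ3 ≠ 0)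
    (memQ : TriMem (D Q) Δ1 Δ2 Δ3) (memR : TriMem (D R) Δ1 Δ2 Δ3)
    (memB1 : TriMem (D B1) Δ1 Δ2 Δ3) (memB2 : TriMem (D B2) Δ1 Δ2 Δ3)
    (hXΔ : D As = Δ1 ∨ D As = Δ2 ∨ D As = Δ3) : False := by
  rcases k4_cases hF hQR hQB1 hQB2 hRB1 hRB2 hB hmQ hmR hmB1 hmB2 with
    hcase | hcase | hcase | hcase
  · have hA_in : StrictIn (D As) (D R) (D B1) (D B2) :=
      propagate hF hRB1 hB hRB2 hQA hmR hmB1 hmB2 hmQ hmA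
        hQR.ne hQB1.ne hQB2.ne (Ne.symm hRA.ne) hAB1 hAB2 hcase
    exact lemV' Δ1 Δ2 Δ3 (D R) (D B1) (D B2) (D As) hΔd memR memB1 memB2 hA_in hXΔ
  · have hA_in : StrictIn (D As) (D Q) (D B1) (D B2) :=
      propagate hF hQB1 hB hQB2 hRA hmQ hmB1 hmB2 hmR hmA
        hQR.ne.symm hRB1.ne hRB2.ne (Ne.symm hQA.ne) hAB1 hAB2 hcase
    exact lemV' Δ1 Δ2 Δ3 (D Q) (D B1) (D B2) (D As) hΔd memQ memB1 memB2 hA_in hXΔ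
  · have hP_in : StrictIn (D Q') (D Q) (D R) (D B2) :=
      propagate hF hQR hRB2 hQB2 hPB1.symm hmQ hmR hmB2 hmB1 hmP
        hQB1.ne.symm hRB1.ne.symm hB.ne hPQ hPR hPB2.ne hcase
    have hA_in : StrictIn (D As) (D Q) (D R) (D B2) :=
      propagate hF hQR hRB2 hQB2 hPA hmQ hmR hmB2 hmP hmA
        hPQ hPR hPB2.ne (Ne.symm hQA.ne) (Ne.symm hRA.ne) hAB2 hP_in
    exact lemV' Δ1 Δ2 Δ3 (D Q) (D R) (D B2) (D As) hΔd memQ memR memB2 hA_in hXΔ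
  · have hP_in : StrictIn (D Q') (D Q) (D R) (D B1) :=
      propagate hF hQR hRB1 hQB1 hPB2.symm hmQ hmR hmB1 hmB2 hmP
        hQB2.ne.symm hRB2.ne.symm hB.ne.symm hPQ hPR hPB1.ne hcase
    have hA_in : StrictIn (D As) (D Q) (D R) (D B1) :=
      propagate hF hQR hRB1 hQB1 hPA hmQ hmR hmB1 hmP hmA
        hPQ hPR hPB1.ne (Ne.symm hQA.ne) (Ne.symm hRA.ne) hAB1 hP_in
    exact lemV' Δ1 Δ2 Δ3 (D Q) (D R) (D B1) (D As) hΔd memQ memR memB1 hA_in hXΔ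

/-- The forbidden frame: three mutual apexes `Q, R, Q'` (with `Q ~ R`) over
two disjoint visible edges. -/
lemma ff2 (hF : IsPlanarSLFrame G S D) {Q R Q' A1 A2 B1 B2 : V}
    (hQR : G.Adj Q R)
    (hQA1 : G.Adj Q A1) (hQA2 : G.Adj Q A2) (hQB1 : G.Adj Q B1) (hQB2 : G.Adj Q B2)
    (hRA1 : G.Adj R A1) (hRA2 : G.Adj R A2) (hRB1 : G.Adj R B1) (hRB2 : G.Adj R B2)
    (hPA1 : G.Adj Q' A1) (hPA2 : G.Adj Q' A2) (hPB1 : G.Adj Q' B1) (hPB2 : G.Adj Q' B2)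
    (hA : G.Adj A1 A2) (hB : G.Adj B1 B2)
    (hPQ : Q' ≠ Q) (hPR : Q' ≠ R)
    (hA1B1 : A1 ≠ B1) (hA1B2 : A1 ≠ B2) (hA2B1 : A2 ≠ B1) (hA2B2 : A2 ≠ B2)
    (hmQ : Q ∈ S) (hmR : R ∈ S) (hmP : Q' ∈ S) (hmA1 : A1 ∈ S) (hmA2 : A2 ∈ S)
    (hmB1 : B1 ∈ S) (hmB2 : B2 ∈ S) : False := by
  rcases k4_cases hF hQR hQA1 hQA2 hRA1 hRA2 hA hmQ hmR hmA1 hmA2 with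
    hO | hO | hO | hO
  · -- Q strictly inside Δ = (R, A1, A2)
    have hB1_in : StrictIn (D B1) (D R) (D A1) (D A2) :=
      propagate hF hRA1 hA hRA2 hQB1 hmR hmA1 hmA2 hmQ hmB1
        hQR.ne hQA1.ne hQA2.ne hRB1.ne.symm (Ne.symm hA1B1) (Ne.symm hA2B1) hO
    have hB2_in : StrictIn (D B2) (D R) (D A1) (D A2) :=
      propagate hF hRA1 hA hRA2 hQB2 hmR hmA1 hmA2 hmQ hmB2
        hQR.ne hQA1.ne hQA2.ne hRB2.ne.symm (Ne.symm hA1B2) (Ne.symm hA2B2) hO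
    exact ff2_inner hF hQR hQB1 hQB2 hRB1 hRB2 hB hPB1 hPB2 hQA1 hRA1 hPA1
      hPQ hPR hA1B1 hA1B2 hmQ hmR hmP hmB1 hmB2 hmA1
      (D R) (D A1) (D A2) hO.1 hO.triMem (triMem_vert1 _ _ _)
      hB1_in.triMem hB2_in.triMem (Or.inr (Or.inl rfl))
  · -- R strictly inside Δ = (Q, A1, A2)
    have hB1_in : StrictIn (D B1) (D Q) (D A1) (D A2) :=
      propagate hF hQA1 hA hQA2 hRB1 hmQ hmA1 hmA2 hmR hmB1
        hQR.ne.symm hRA1.ne hRA2.ne hQB1.ne.symm (Ne.symm hA1B1) (Ne.symm hA2B1) hO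
    have hB2_in : StrictIn (D B2) (D Q) (D A1) (D A2) :=
      propagate hF hQA1 hA hQA2 hRB2 hmQ hmA1 hmA2 hmR hmB2
        hQR.ne.symm hRA1.ne hRA2.ne hQB2.ne.symm (Ne.symm hA1B2) (Ne.symm hA2B2) hO
    exact ff2_inner hF hQR hQB1 hQB2 hRB1 hRB2 hB hPB1 hPB2 hQA1 hRA1 hPA1
      hPQ hPR hA1B1 hA1B2 hmQ hmR hmP hmB1 hmB2 hmA1
      (D Q) (D A1) (D A2) hO.1 (triMem_vert1 _ _ _) hO.triMem
      hB1_in.triMem hB2_in.triMem (Or.inr (Or.inl rfl))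
  · -- A1 strictly inside Δ = (Q, R, A2)
    have hP_in : StrictIn (D Q') (D Q) (D R) (D A2) :=
      propagate hF hQR hRA2 hQA2 hPA1.symm hmQ hmR hmA2 hmA1 hmP
        hQA1.ne.symm hRA1.ne.symm hA.ne hPQ hPR hPA2.ne hO
    have hB1_in : StrictIn (D B1) (D Q) (D R) (D A2) :=
      propagate hF hQR hRA2 hQA2 hPB1 hmQ hmR hmA2 hmP hmB1
        hPQ hPR hPA2.ne hQB1.ne.symm hRB1.ne.symm (Ne.symm hA2B1) hP_in
    have hB2_in : StrictIn (D B2) (D Q) (D R) (D A2) :=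
      propagate hF hQR hRA2 hQA2 hPB2 hmQ hmR hmA2 hmP hmB2
        hPQ hPR hPA2.ne hQB2.ne.symm hRB2.ne.symm (Ne.symm hA2B2) hP_in
    exact ff2_inner hF hQR hQB1 hQB2 hRB1 hRB2 hB hPB1 hPB2 hQA2 hRA2 hPA2
      hPQ hPR hA2B1 hA2B2 hmQ hmR hmP hmB1 hmB2 hmA2
      (D Q) (D R) (D A2) hO.1 (triMem_vert1 _ _ _) (triMem_vert2 _ _ _)
      hB1_in.triMem hB2_in.triMem (Or.inr (Or.inr rfl))
  · -- A2 strictly inside Δ = (Q, R, A1)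
    have hP_in : StrictIn (D Q') (D Q) (D R) (D A1) :=
      propagate hF hQR hRA1 hQA1 hPA2.symm hmQ hmR hmA1 hmA2 hmP
        hQA2.ne.symm hRA2.ne.symm hA.ne.symm hPQ hPR hPA1.ne hO
    have hB1_in : StrictIn (D B1) (D Q) (D R) (D A1) :=
      propagate hF hQR hRA1 hQA1 hPB1 hmQ hmR hmA1 hmP hmB1
        hPQ hPR hPA1.ne hQB1.ne.symm hRB1.ne.symm (Ne.symm hA1B1) hP_in
    have hB2_in : StrictIn (D B2) (D Q) (D R) (D A1) :=
      propagate hF hQR hRA1 hQA1 hPB2 hmQ hmR hmA1 hmP hmB2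
        hPQ hPR hPA1.ne hQB2.ne.symm hRB2.ne.symm (Ne.symm hA1B2) hP_in
    exact ff2_inner hF hQR hQB1 hQB2 hRB1 hRB2 hB hPB1 hPB2 hQA1 hRA1 hPA1
      hPQ hPR hA1B1 hA1B2 hmQ hmR hmP hmB1 hmB2 hmA1
      (D Q) (D R) (D A1) hO.1 (triMem_vert1 _ _ _) (triMem_vert2 _ _ _)
      hB1_in.triMem hB2_in.triMem (Or.inr (Or.inr rfl))

end Frame

section Combinatorics

/-- The three cycle families. -/
def cyc : Fin 3 → Fin 4 → GVert := fun c k =>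
  match c with
  | 0 => .a k
  | 1 => .b k
  | 2 => .c k

lemma fin4_succ_ne (k : Fin 4) : k ≠ k + 1 := by
  intro h
  have h2 := congrArg Fin.val h
  simp [Fin.val_add] at h2
  omega

lemma fin4_add31 (k : Fin 4) : k + 3 + 1 = k := by
  have h : (3 : Fin 4) + 1 = 0 := by decide
  rw [add_assoc, h, add_zero]

lemma adj_cyc (c : Fin 3) (k : Fin 4) : GraphG.Adj (cyc c k) (cyc c (k+1)) := by
  fin_cases c <;>
    refine (SimpleGraph.fromRel_adj _ _ _).mpr
      ⟨by intro h; exact fin4_succ_ne k (by simpa [cyc] using h), Or.inl (by simp [cyc, GRel])⟩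

lemma adj_q_cyc (i : Fin 4) (j : Fin 2) (c : Fin 3) (k : Fin 4) :
    GraphG.Adj (.q i j) (cyc c k) := by
  fin_cases c <;>
    exact (SimpleGraph.fromRel_adj _ _ _).mpr ⟨by simp [cyc], Or.inl (by simp [cyc, GRel])⟩

lemma adj_r_q (i : Fin 4) (j : Fin 2) : GraphG.Adj (.r i j) (.q i j) :=
  (SimpleGraph.fromRel_adj _ _ _).mpr ⟨by simp, Or.inl (by simp [GRel])⟩

lemma adj_r_cyc1 (i : Fin 4) (j : Fin 2) (c : Fin 3) :
    GraphG.Adj (.r i j) (cyc c i) := by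
  fin_cases c <;>
    exact (SimpleGraph.fromRel_adj _ _ _).mpr
      ⟨by simp [cyc], Or.inl (by simp [cyc, GRel])⟩

lemma adj_r_cyc2 (i : Fin 4) (j : Fin 2) (c : Fin 3) :
    GraphG.Adj (.r i j) (cyc c (i+1)) := by
  fin_cases c <;>
    exact (SimpleGraph.fromRel_adj _ _ _).mpr
      ⟨by simp [cyc], Or.inl (by simp [cyc, GRel])⟩

/-- The set of the twelve cycle vertices. -/
def CV : Finset GVert :=
  Finset.image (fun p : Fin 3 × Fin 4 => cyc p.1 p.2) Finset.univ

lemma mem_CV {v : GVert} : v ∈ CV ↔ ∃ c k, v = cyc c k := by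
  simp only [CV, Finset.mem_image, Finset.mem_univ, true_and, Prod.exists]
  constructor
  · rintro ⟨c, k, h⟩; exact ⟨c, k, h.symm⟩
  · rintro ⟨c, k, h⟩; exact ⟨c, k, h.symm⟩

lemma cyc_mem_CV (c : Fin 3) (k : Fin 4) : cyc c k ∈ CV :=
  mem_CV.mpr ⟨c, k, rfl⟩

lemma CV_nonempty : CV.Nonempty := ⟨cyc 0 0, cyc_mem_CV 0 0⟩

lemma cyc_ne_q (c : Fin 3) (k : Fin 4) (i : Fin 4) (j : Fin 2) :
    cyc c k ≠ .q i j := by fin_cases c <;> simp [cyc]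

lemma cyc_ne_r (c : Fin 3) (k : Fin 4) (i : Fin 4) (j : Fin 2) :
    cyc c k ≠ .r i j := by fin_cases c <;> simp [cyc]

lemma fin4_add3_ne_add1 (k : Fin 4) : k + 3 ≠ k + 1 := by
  intro h
  have h2 := congrArg Fin.val h
  simp [Fin.val_add] at h2
  omega

lemma cyc_nbrs_ne (c : Fin 3) (k : Fin 4) : cyc c (k+3) ≠ cyc c (k+1) := by
  fin_cases c <;>
    exact fun h => fin4_add3_ne_add1 k (by simpa [cyc] using h)

end Combinatorics

/-- In every planar geometric storyplan of `G`, there are at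
least 6 index pairs `(i, j)` such that at some time step the apex pair
`q i j, r i j` and all twelve cycle vertices are simultaneously visible. -/
theorem six_apex_pairs_with_all_cycles
    (len : ℕ) (s e : GVert → ℕ) (D : GVert → ℝ × ℝ)
    (hSP : IsGeomStoryplan GraphG len s e D) :
    ∃ S : Finset (Fin 4 × Fin 2), 6 ≤ S.card ∧
      ∀ ij ∈ S, ∃ t, Visible s e t (.q ij.1 ij.2) ∧ Visible s e t (.r ij.1 ij.2) ∧
        CyclesVisible s e t := by
  classical
  obtain ⟨hlen, hbounds, hcooc, hframe⟩ := hSP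
  have co : ∀ u v, GraphG.Adj u v → s u ≤ e v ∧ s v ≤ e u := by
    intro u v h
    obtain ⟨t, h1, h2, h3, h4⟩ := hcooc u v h
    exact ⟨h1.trans h4, h3.trans h2⟩
  obtain ⟨u0, hu0CV, hu0min⟩ := CV.exists_min_image e CV_nonempty
  obtain ⟨v0, hv0CV, hv0max⟩ := CV.exists_max_image s CV_nonempty
  have hadjq : ∀ (i : Fin 4) (j : Fin 2) v, v ∈ CV → GraphG.Adj (.q i j) v := by
    intro i j v hv
    obtain ⟨c, k, rfl⟩ := mem_CV.mp hv
    exact adj_q_cyc i j c k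
  have hq1 : ∀ (i : Fin 4) (j : Fin 2), s (.q i j) ≤ e u0 :=
    fun i j => (co _ _ (hadjq i j u0 hu0CV)).1
  have hq2 : ∀ (i : Fin 4) (j : Fin 2), s v0 ≤ e (.q i j) :=
    fun i j => (co _ _ (hadjq i j v0 hv0CV)).2
  -- Step I: all twelve cycle intervals share the window [s v0, e u0].
  have hS0E0 : s v0 ≤ e u0 := by
    by_contra hcon
    push_neg at hcon
    obtain ⟨c, k, rfl⟩ := mem_CV.mp hu0CV
    have ht0len : e (cyc c k) ≤ len := (hbounds _).2.2
    have ht01 : 1 ≤ e (cyc c k) := le_trans (hbounds _).1 (hbounds _).2.1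
    have hPl := hframe (e (cyc c k)) ht01 ht0len
    have hadj1 : GraphG.Adj (cyc c (k+3)) (cyc c k) := by
      have h := adj_cyc c (k+3)
      rwa [fin4_add31 k] at h
    have hadj2 : GraphG.Adj (cyc c k) (cyc c (k+1)) := adj_cyc c k
    have hmu0 : cyc c k ∈ {v | s v ≤ e (cyc c k) ∧ e (cyc c k) ≤ e v} :=
      ⟨(hbounds _).2.1, le_refl _⟩
    have hmn1 : cyc c (k+3) ∈ {v | s v ≤ e (cyc c k) ∧ e (cyc c k) ≤ e v} :=
      ⟨(co _ _ hadj1).1, hu0min _ (cyc_mem_CV c (k+3))⟩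
    have hmn2 : cyc c (k+1) ∈ {v | s v ≤ e (cyc c k) ∧ e (cyc c k) ≤ e v} :=
      ⟨(co _ _ hadj2).2, hu0min _ (cyc_mem_CV c (k+1))⟩
    have hmq : ∀ (i : Fin 4) (j : Fin 2),
        (GVert.q i j) ∈ {v | s v ≤ e (cyc c k) ∧ e (cyc c k) ≤ e v} :=
      fun i j => ⟨hq1 i j, le_trans hcon.le (hq2 i j)⟩
    obtain ⟨p, -, p', -, hpp', heq⟩ :=
      Finset.exists_ne_map_eq_of_card_lt_of_maps_to
        (s := (Finset.univ : Finset (Fin 4 × Fin 2)))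
        (t := (Finset.univ : Finset (Bool × Bool)))
        (by simp)
        (f := fun p => ((decide (0 < det3 (D (cyc c (k+3))) (D (cyc c k)) (D (.q p.1 p.2))),
          decide (0 < det3 (D (cyc c k)) (D (cyc c (k+1))) (D (.q p.1 p.2)))) : Bool × Bool))
        (fun _ _ => Finset.mem_univ _)
    have hqq' : (GVert.q p.1 p.2) ≠ (GVert.q p'.1 p'.2) := by
      intro h
      apply hpp'
      cases p; cases p'
      simpa [Prod.ext_iff] using h
    have hoff1 : ∀ (i : Fin 4) (j : Fin 2),
        det3 (D (cyc c (k+3))) (D (cyc c k)) (D (.q i j)) ≠ 0 :=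
      fun i j => not_collinear hPl hadj1
        ((hadjq i j _ (cyc_mem_CV c (k+3))).symm) ((hadjq i j _ (cyc_mem_CV c k)).symm)
        hmn1 hmu0 (hmq i j)
    have hoff2 : ∀ (i : Fin 4) (j : Fin 2),
        det3 (D (cyc c k)) (D (cyc c (k+1))) (D (.q i j)) ≠ 0 :=
      fun i j => not_collinear hPl hadj2
        ((hadjq i j _ (cyc_mem_CV c k)).symm) ((hadjq i j _ (cyc_mem_CV c (k+1))).symm)
        hmu0 hmn2 (hmq i j)
    have hsame : ∀ {x y : ℝ}, x ≠ 0 → y ≠ 0 → ((0 < x) ↔ (0 < y)) → 0 < x * y := by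
      intro x y hx hy hiff
      rcases hx.lt_or_gt with h | h
      · rcases hy.lt_or_gt with h2 | h2
        · exact mul_pos_of_neg_of_neg h h2
        · exact absurd (hiff.mpr h2) (not_lt.mpr h.le)
      · exact mul_pos h (hiff.mp h)
    have hside1 : 0 < det3 (D (cyc c (k+3))) (D (cyc c k)) (D (.q p.1 p.2)) *
        det3 (D (cyc c (k+3))) (D (cyc c k)) (D (.q p'.1 p'.2)) := by
      apply hsame (hoff1 p.1 p.2) (hoff1 p'.1 p'.2)
      have hb := congrArg Prod.fst heq
      simpa using decide_eq_decide.mp hb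
    have hside2 : 0 < det3 (D (cyc c k)) (D (cyc c (k+1))) (D (.q p.1 p.2)) *
        det3 (D (cyc c k)) (D (cyc c (k+1))) (D (.q p'.1 p'.2)) := by
      apply hsame (hoff2 p.1 p.2) (hoff2 p'.1 p'.2)
      have hb := congrArg Prod.snd heq
      simpa using decide_eq_decide.mp hb
    exact claim2 hPl hadj1 hadj2
      ((hadjq p.1 p.2 _ (cyc_mem_CV c (k+3))))
      ((hadjq p.1 p.2 _ (cyc_mem_CV c k)))
      ((hadjq p.1 p.2 _ (cyc_mem_CV c (k+1))))
      ((hadjq p'.1 p'.2 _ (cyc_mem_CV c (k+3))))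
      ((hadjq p'.1 p'.2 _ (cyc_mem_CV c k)))
      ((hadjq p'.1 p'.2 _ (cyc_mem_CV c (k+1))))
      hmn1 hmu0 hmn2 (hmq p.1 p.2) (hmq p'.1 p'.2)
      (cyc_nbrs_ne c k) hqq' hside1 hside2
  -- names for the window
  have hcycS : ∀ v ∈ CV, s v ≤ s v0 := fun v hv => hv0max v hv
  have hcycE : ∀ v ∈ CV, e u0 ≤ e v := fun v hv => hu0min v hv
  have cyc0 : ∀ k : Fin 4, cyc 0 k = GVert.a k := fun _ => rfl
  have cyc1 : ∀ k : Fin 4, cyc 1 k = GVert.b k := fun _ => rfl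
  have cyc2 : ∀ k : Fin 4, cyc 2 k = GVert.c k := fun _ => rfl
  have hqne : ∀ p1 p2 : Fin 4 × Fin 2, p1 ≠ p2 →
      (GVert.q p1.1 p1.2) ≠ (GVert.q p2.1 p2.2) := by
    intro p1 p2 hne h
    apply hne
    cases p1; cases p2
    simpa [Prod.ext_iff] using h
  -- two bad pairs before the window
  have hbefore : ∀ p1 p2 : Fin 4 × Fin 2, p1 ≠ p2 →
      e (.r p1.1 p1.2) < s v0 → e (.r p2.1 p2.2) < s v0 →
      e (.r p2.1 p2.2) ≤ e (.r p1.1 p1.2) → False := by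
    rintro ⟨i1, j1⟩ ⟨i2, j2⟩ hne h1 h2 hle
    have ht1len : e (.r i1 j1) ≤ len := (hbounds _).2.2
    have ht11 : 1 ≤ e (.r i1 j1) := le_trans (hbounds _).1 (hbounds _).2.1
    have hPl := hframe (e (.r i1 j1)) ht11 ht1len
    have hmR : (GVert.r i1 j1) ∈ {v | s v ≤ e (.r i1 j1) ∧ e (.r i1 j1) ≤ e v} :=
      ⟨(hbounds _).2.1, le_refl _⟩
    have hmQ : (GVert.q i1 j1) ∈ {v | s v ≤ e (.r i1 j1) ∧ e (.r i1 j1) ≤ e v} :=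
      ⟨(co _ _ (adj_r_q i1 j1)).2, le_trans h1.le (hq2 i1 j1)⟩
    have hmQ' : (GVert.q i2 j2) ∈ {v | s v ≤ e (.r i1 j1) ∧ e (.r i1 j1) ≤ e v} :=
      ⟨le_trans (co _ _ (adj_r_q i2 j2)).2 hle, le_trans h1.le (hq2 i2 j2)⟩
    have hmcyc : ∀ c : Fin 3, ∀ k : Fin 4, GraphG.Adj (.r i1 j1) (cyc c k) →
        (cyc c k) ∈ {v | s v ≤ e (.r i1 j1) ∧ e (.r i1 j1) ≤ e v} := by
      intro c k hadj
      refine ⟨(co _ _ hadj).2, ?_⟩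
      exact le_trans h1.le (le_trans hS0E0 (hcycE _ (cyc_mem_CV c k)))
    exact ff2 hPl (adj_r_q i1 j1).symm
      (hadjq i1 j1 _ (cyc_mem_CV 0 i1)) (hadjq i1 j1 _ (cyc_mem_CV 0 (i1+1)))
      (hadjq i1 j1 _ (cyc_mem_CV 1 i1)) (hadjq i1 j1 _ (cyc_mem_CV 1 (i1+1)))
      (adj_r_cyc1 i1 j1 0) (adj_r_cyc2 i1 j1 0) (adj_r_cyc1 i1 j1 1) (adj_r_cyc2 i1 j1 1)
      (hadjq i2 j2 _ (cyc_mem_CV 0 i1)) (hadjq i2 j2 _ (cyc_mem_CV 0 (i1+1)))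
      (hadjq i2 j2 _ (cyc_mem_CV 1 i1)) (hadjq i2 j2 _ (cyc_mem_CV 1 (i1+1)))
      (adj_cyc 0 i1) (adj_cyc 1 i1)
      (hqne _ _ (Ne.symm hne)) (by simp)
      (by simp [cyc]) (by simp [cyc]) (by simp [cyc]) (by simp [cyc])
      hmQ hmR hmQ' (hmcyc 0 i1 (adj_r_cyc1 i1 j1 0)) (hmcyc 0 (i1+1) (adj_r_cyc2 i1 j1 0))
      (hmcyc 1 i1 (adj_r_cyc1 i1 j1 1)) (hmcyc 1 (i1+1) (adj_r_cyc2 i1 j1 1))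
  -- two bad pairs after the window
  have hafter : ∀ p1 p2 : Fin 4 × Fin 2, p1 ≠ p2 →
      e u0 < s (.r p1.1 p1.2) → e u0 < s (.r p2.1 p2.2) →
      s (.r p1.1 p1.2) ≤ s (.r p2.1 p2.2) → False := by
    rintro ⟨i1, j1⟩ ⟨i2, j2⟩ hne h1 h2 hle
    have ht1len : s (.r i1 j1) ≤ len := le_trans (hbounds _).2.1 (hbounds _).2.2
    have ht11 : 1 ≤ s (.r i1 j1) := (hbounds _).1
    have hPl := hframe (s (.r i1 j1)) ht11 ht1len
    have hmR : (GVert.r i1 j1) ∈ {v | s v ≤ s (.r i1 j1) ∧ s (.r i1 j1) ≤ e v} :=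
      ⟨le_refl _, (hbounds _).2.1⟩
    have hmQ : (GVert.q i1 j1) ∈ {v | s v ≤ s (.r i1 j1) ∧ s (.r i1 j1) ≤ e v} :=
      ⟨le_trans (hq1 i1 j1) h1.le, (co _ _ (adj_r_q i1 j1)).1⟩
    have hmQ' : (GVert.q i2 j2) ∈ {v | s v ≤ s (.r i1 j1) ∧ s (.r i1 j1) ≤ e v} :=
      ⟨le_trans (hq1 i2 j2) h1.le, le_trans hle (co _ _ (adj_r_q i2 j2)).1⟩
    have hmcyc : ∀ c : Fin 3, ∀ k : Fin 4, GraphG.Adj (.r i1 j1) (cyc c k) →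
        (cyc c k) ∈ {v | s v ≤ s (.r i1 j1) ∧ s (.r i1 j1) ≤ e v} := by
      intro c k hadj
      refine ⟨?_, (co _ _ hadj).1⟩
      exact le_trans (hcycS _ (cyc_mem_CV c k)) (le_trans hS0E0 h1.le)
    exact ff2 hPl (adj_r_q i1 j1).symm
      (hadjq i1 j1 _ (cyc_mem_CV 0 i1)) (hadjq i1 j1 _ (cyc_mem_CV 0 (i1+1)))
      (hadjq i1 j1 _ (cyc_mem_CV 1 i1)) (hadjq i1 j1 _ (cyc_mem_CV 1 (i1+1)))
      (adj_r_cyc1 i1 j1 0) (adj_r_cyc2 i1 j1 0) (adj_r_cyc1 i1 j1 1) (adj_r_cyc2 i1 j1 1)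
      (hadjq i2 j2 _ (cyc_mem_CV 0 i1)) (hadjq i2 j2 _ (cyc_mem_CV 0 (i1+1)))
      (hadjq i2 j2 _ (cyc_mem_CV 1 i1)) (hadjq i2 j2 _ (cyc_mem_CV 1 (i1+1)))
      (adj_cyc 0 i1) (adj_cyc 1 i1)
      (hqne _ _ (Ne.symm hne)) (by simp)
      (by simp [cyc]) (by simp [cyc]) (by simp [cyc]) (by simp [cyc])
      hmQ hmR hmQ' (hmcyc 0 i1 (adj_r_cyc1 i1 j1 0)) (hmcyc 0 (i1+1) (adj_r_cyc2 i1 j1 0))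
      (hmcyc 1 i1 (adj_r_cyc1 i1 j1 1)) (hmcyc 1 (i1+1) (adj_r_cyc2 i1 j1 1))
  -- the bad set has at most two elements
  have hB2 : (Finset.univ.filter (fun ij : Fin 4 × Fin 2 =>
      ¬(s v0 ≤ e (.r ij.1 ij.2) ∧ s (.r ij.1 ij.2) ≤ e u0))).card ≤ 2 := by
    by_contra hc
    rw [not_le] at hc
    obtain ⟨x, hx, y, hy, z, hz, hxy, hxz, hyz⟩ := Finset.two_lt_card.mp hc
    have hbad : ∀ w ∈ Finset.univ.filter (fun ij : Fin 4 × Fin 2 =>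
        ¬(s v0 ≤ e (.r ij.1 ij.2) ∧ s (.r ij.1 ij.2) ≤ e u0)),
        e (.r w.1 w.2) < s v0 ∨ e u0 < s (.r w.1 w.2) := by
      intro w hw
      have h := (Finset.mem_filter.mp hw).2
      omega
    have hPB : ∀ p1 p2 : Fin 4 × Fin 2, p1 ≠ p2 → e (.r p1.1 p1.2) < s v0 →
        e (.r p2.1 p2.2) < s v0 → False := by
      intro p1 p2 hne h1 h2
      rcases le_total (e (.r p2.1 p2.2)) (e (.r p1.1 p1.2)) with h | h
      · exact hbefore p1 p2 hne h1 h2 h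
      · exact hbefore p2 p1 hne.symm h2 h1 h
    have hPA : ∀ p1 p2 : Fin 4 × Fin 2, p1 ≠ p2 → e u0 < s (.r p1.1 p1.2) →
        e u0 < s (.r p2.1 p2.2) → False := by
      intro p1 p2 hne h1 h2
      rcases le_total (s (.r p1.1 p1.2)) (s (.r p2.1 p2.2)) with h | h
      · exact hafter p1 p2 hne h1 h2 h
      · exact hafter p2 p1 hne.symm h2 h1 h
    rcases hbad x hx with h1 | h1 <;> rcases hbad y hy with h2 | h2 <;>
      rcases hbad z hz with h3 | h3
    · exact hPB x y hxy h1 h2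
    · exact hPB x y hxy h1 h2
    · exact hPB x z hxz h1 h3
    · exact hPA y z hyz h2 h3
    · exact hPB y z hyz h2 h3
    · exact hPA x z hxz h1 h3
    · exact hPA x y hxy h1 h2
    · exact hPA x y hxy h1 h2
  -- conclusion
  refine ⟨Finset.univ.filter (fun ij : Fin 4 × Fin 2 =>
      s v0 ≤ e (.r ij.1 ij.2) ∧ s (.r ij.1 ij.2) ≤ e u0), ?_, ?_⟩
  · have hsum := Finset.card_filter_add_card_filter_not
      (s := (Finset.univ : Finset (Fin 4 × Fin 2)))
      (p := fun ij : Fin 4 × Fin 2 => s v0 ≤ e (.r ij.1 ij.2) ∧ s (.r ij.1 ij.2) ≤ e u0)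
    have hcard : (Finset.univ : Finset (Fin 4 × Fin 2)).card = 8 := by simp
    omega
  · intro ij hij
    obtain ⟨hrS, hrE⟩ := (Finset.mem_filter.mp hij).2
    refine ⟨max (s (.q ij.1 ij.2)) (max (s (.r ij.1 ij.2)) (s v0)), ⟨le_max_left _ _, ?_⟩,
      ⟨le_trans (le_max_left _ _) (le_max_right _ _), ?_⟩, ?_⟩
    · exact max_le (hbounds _).2.1 (max_le (co _ _ (adj_r_q ij.1 ij.2)).1 (hq2 ij.1 ij.2))
    · exact max_le (co _ _ (adj_r_q ij.1 ij.2)).2 (max_le (hbounds _).2.1 hrS)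
    · have htE : max (s (.q ij.1 ij.2)) (max (s (.r ij.1 ij.2)) (s v0)) ≤ e u0 :=
        max_le (hq1 ij.1 ij.2) (max_le hrE hS0E0)
      have hvis : ∀ c : Fin 3, ∀ k : Fin 4,
          Visible s e (max (s (.q ij.1 ij.2)) (max (s (.r ij.1 ij.2)) (s v0))) (cyc c k) := by
        intro c k
        exact ⟨le_trans (hcycS _ (cyc_mem_CV c k))
            (le_trans (le_max_right _ _) (le_max_right _ _)),
          le_trans htE (hcycE _ (cyc_mem_CV c k))⟩
      intro k
      exact ⟨hvis 0 k, hvis 1 k, hvis 2 k⟩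
end
end

section
/- In every planar geometric storyplan of the graph G, there is a time step at which all twelve cycle vertices are simultaneously visible. -/
namespace Story



def Dt (p q : ℝ × ℝ) : ℝ := p.1 * q.2 - p.2 * q.1

lemma Dt_smul_left (p q : ℝ × ℝ) (c : ℝ) : Dt (c • p) q = c * Dt p q := by
  simp only [Dt, Prod.smul_fst, Prod.smul_snd, smul_eq_mul]; ring

lemma Dt_zero_left (q : ℝ × ℝ) : Dt 0 q = 0 := by simp [Dt]

lemma Dt_zero_right (q : ℝ × ℝ) : Dt q 0 = 0 := by simp [Dt]

lemma par_of_dt_eq_zero {A Y : ℝ × ℝ} (h : Dt A Y = 0) (hA : A ≠ 0) : ∃ c : ℝ, Y = c • A := by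
  rcases eq_or_ne A.1 0 with h1 | h1
  · have h2 : A.2 ≠ 0 := fun h2 => hA (Prod.ext h1 h2)
    refine ⟨Y.2 / A.2, ?_⟩
    have hy1 : Y.1 = 0 := by
      have h' : A.1 * Y.2 - A.2 * Y.1 = 0 := h
      rw [h1] at h'
      have := mul_eq_zero.mp (by linarith : A.2 * Y.1 = 0)
      tauto
    apply Prod.ext
    · simp [Prod.smul_fst, hy1, h1]
    · simp only [Prod.smul_snd, smul_eq_mul]; field_simp
  · refine ⟨Y.1 / A.1, ?_⟩
    have hy2 : Y.2 = A.2 * Y.1 / A.1 := by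
      have h' : A.1 * Y.2 - A.2 * Y.1 = 0 := h
      field_simp; linarith
    apply Prod.ext
    · simp only [Prod.smul_fst, smul_eq_mul]; field_simp
    · simp only [Prod.smul_snd, smul_eq_mul, hy2]; field_simp

lemma rep (A B Z : ℝ × ℝ) (h : Dt A B ≠ 0) :
    Z = (Dt Z B / Dt A B) • A + (Dt A Z / Dt A B) • B := by
  have hD : A.1 * B.2 - A.2 * B.1 ≠ 0 := h
  apply Prod.ext
  · show Z.1 = (Dt Z B / Dt A B) * A.1 + (Dt A Z / Dt A B) * B.1
    rw [div_mul_eq_mul_div, div_mul_eq_mul_div, ← add_div, eq_div_iff h]; simp only [Dt]; ring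
  · show Z.2 = (Dt Z B / Dt A B) * A.2 + (Dt A Z / Dt A B) * B.2
    rw [div_mul_eq_mul_div, div_mul_eq_mul_div, ← add_div, eq_div_iff h]; simp only [Dt]; ring

def InC (A B X : ℝ × ℝ) : Prop := 0 < Dt A X * Dt A B ∧ 0 < Dt X B * Dt A B

lemma InC.dt_ne {A B X : ℝ × ℝ} (h : InC A B X) : Dt A B ≠ 0 := by
  intro h0
  have h1 := h.1
  rw [h0, mul_zero] at h1
  exact lt_irrefl 0 h1

lemma mutual_exclusion {A B X : ℝ × ℝ} (h1 : InC A B X) (h2 : InC A X B) : False := by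
  obtain ⟨a1, a2⟩ := h1
  obtain ⟨b1, b2⟩ := h2
  have hs : Dt B X = - Dt X B := by simp only [Dt]; ring
  rw [hs] at b2
  nlinarith [mul_pos a1 a2, mul_nonneg (le_of_lt b2) (sq_nonneg (Dt A B))]

/-- The main geometric contradiction: edge (v,w) of the base, apex u; x strictly inside the
cone at u spanned by v,w, y outside that cone, and xy an edge disjoint from everything. -/
lemma fin (u v w x y : ℝ × ℝ)
    (hP : InC (v - u) (w - u) (x - u))
    (hNP : ¬ InC (v - u) (w - u) (y - u))
    (hY0 : y ≠ u)
    (hYA : ∀ c : ℝ, 0 < c → y - u ≠ c • (v - u))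
    (hYB : ∀ c : ℝ, 0 < c → y - u ≠ c • (w - u))
    (hseg1 : segment ℝ u x ∩ segment ℝ v w = ∅)
    (hseg2 : segment ℝ x y ∩ segment ℝ v w = ∅)
    (hseg3 : segment ℝ x y ∩ segment ℝ u v = ∅)
    (hseg4 : segment ℝ x y ∩ segment ℝ u w = ∅) : False := by
  set A := v - u with hA
  set B := w - u with hB
  set X := x - u with hX
  set Y := y - u with hYdef
  have hD : Dt A B ≠ 0 := hP.dt_ne
  have hq2 : 0 < Dt A B ^ 2 := lt_of_le_of_ne (sq_nonneg _) (Ne.symm (pow_ne_zero 2 hD))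
  have hA0 : A ≠ 0 := by
    intro h0
    have := hP.1
    rw [h0, Dt_zero_left, zero_mul] at this
    exact lt_irrefl 0 this
  have hB0 : B ≠ 0 := by
    intro h0
    have := hP.2
    rw [h0, Dt_zero_right, zero_mul] at this
    exact lt_irrefl 0 this
  have hYne : Y ≠ 0 := sub_ne_zero.mpr hY0
  set α := Dt X B / Dt A B with hα
  set β := Dt A X / Dt A B with hβ
  have hαpos : 0 < α := by
    rw [hα, show Dt X B / Dt A B = (Dt X B * Dt A B) / Dt A B ^ 2 by field_simp]
    exact div_pos hP.2 hq2
  have hβpos : 0 < β := by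
    rw [hβ, show Dt A X / Dt A B = (Dt A X * Dt A B) / Dt A B ^ 2 by field_simp]
    exact div_pos hP.1 hq2
  have hx : x = u + α • A + β • B := by
    have h0 := rep A B X hD
    rw [← hα, ← hβ] at h0
    rw [hX] at h0
    have : x - u + u = u + α • A + β • B := by rw [h0]; abel
    simpa using this
  set μa := Dt Y B / Dt A B with hμa
  set μb := Dt A Y / Dt A B with hμb
  have hy : y = u + μa • A + μb • B := by
    have h0 := rep A B Y hD
    rw [← hμa, ← hμb] at h0
    rw [hYdef] at h0
    have : y - u + u = u + μa • A + μb • B := by rw [h0]; abel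
    simpa using this
  have hout : μa < 0 ∨ μb < 0 := by
    rcases lt_trichotomy (Dt A Y * Dt A B) 0 with hlt | heq | hgt
    · right
      rw [hμb, show Dt A Y / Dt A B = (Dt A Y * Dt A B) / Dt A B ^ 2 by field_simp]
      exact div_neg_of_neg_of_pos hlt hq2
    · have h0 : Dt A Y = 0 := by
        rcases mul_eq_zero.mp heq with h | h
        · exact h
        · exact absurd h hD
      obtain ⟨c, hc⟩ := par_of_dt_eq_zero h0 hA0
      have hcne : c ≠ 0 := by
        intro h; rw [h, zero_smul] at hc; exact hYne hc
      have hcneg : c < 0 := by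
        rcases lt_trichotomy c 0 with h | h | h
        · exact h
        · exact absurd h hcne
        · exact absurd hc (hYA c h)
      left
      rw [hμa, hc, Dt_smul_left]
      rw [mul_div_assoc, div_self hD, mul_one]
      exact hcneg
    · have h2 : ¬ (0 < Dt Y B * Dt A B) := fun hh => hNP ⟨hgt, hh⟩
      rcases lt_or_eq_of_le (not_lt.mp h2) with hlt | heq2
      · left
        rw [hμa, show Dt Y B / Dt A B = (Dt Y B * Dt A B) / Dt A B ^ 2 by field_simp]
        exact div_neg_of_neg_of_pos hlt hq2
      · have h0 : Dt B Y = 0 := by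
          have h0' : Dt Y B = 0 := by
            rcases mul_eq_zero.mp heq2 with h | h
            · exact h
            · exact absurd h hD
          simp only [Dt] at h0' ⊢; linarith
        obtain ⟨c, hc⟩ := par_of_dt_eq_zero h0 hB0
        have hcne : c ≠ 0 := by
          intro h; rw [h, zero_smul] at hc; exact hYne hc
        have hcneg : c < 0 := by
          rcases lt_trichotomy c 0 with h | h | h
          · exact h
          · exact absurd h hcne
          · exact absurd hc (hYB c h)
        right
        rw [hμb, hc, show Dt A (c • B) = c * Dt A B by
          simp only [Dt, Prod.smul_fst, Prod.smul_snd, smul_eq_mul]; ring]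
        rw [mul_div_assoc, div_self hD, mul_one]
        exact hcneg
  rcases lt_or_ge (α + β) 1 with hcase | hcase
  · -- x strictly inside triangle u v w ; segment x y must exit
    set lu := 1 - α - β with hlu
    have hlupos : 0 < lu := by rw [hlu]; linarith
    set μu := 1 - μa - μb with hμu
    set f : ℝ → ℝ := fun θ => min (min ((1-θ)*lu + θ*μu) ((1-θ)*α + θ*μa)) ((1-θ)*β + θ*μb)
      with hf
    have hcont : ContinuousOn f (Set.Icc 0 1) := by
      apply Continuous.continuousOn
      apply Continuous.min
      apply Continuous.min
      all_goals fun_prop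
    have hf0 : 0 < f 0 := by
      simp only [hf]
      norm_num
      exact ⟨⟨hlupos, hαpos⟩, hβpos⟩
    have hf1 : f 1 < 0 := by
      simp only [hf]
      norm_num
      rcases hout with h | h
      · exact Or.inl (Or.inr h)
      · exact Or.inr h
    have hsub := intermediate_value_Icc' (by norm_num : (0:ℝ) ≤ 1) hcont
    have h0mem : (0:ℝ) ∈ Set.Icc (f 1) (f 0) := ⟨le_of_lt hf1, le_of_lt hf0⟩
    obtain ⟨θ, hθ, hfθ⟩ := hsub h0mem
    set cu := (1-θ)*lu + θ*μu with hcu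
    set ca := (1-θ)*α + θ*μa with hca
    set cb := (1-θ)*β + θ*μb with hcb
    have hfv : min (min cu ca) cb = 0 := hfθ
    have hcu0 : 0 ≤ cu := by
      rw [← hfv]; exact le_trans (min_le_left _ _) (min_le_left _ _)
    have hca0 : 0 ≤ ca := by
      rw [← hfv]; exact le_trans (min_le_left _ _) (min_le_right _ _)
    have hcb0 : 0 ≤ cb := by
      rw [← hfv]; exact min_le_right _ _
    have hsum : cu + ca + cb = 1 := by
      rw [hcu, hca, hcb, hlu, hμu]; ring
    set p := (1-θ) • x + θ • y with hp
    have hpxy : p ∈ segment ℝ x y := by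
      refine ⟨1-θ, θ, by linarith [hθ.2], hθ.1, by ring, rfl⟩
    have hprep : p = cu • u + ca • v + cb • w := by
      rw [hp, hx, hy, hcu, hca, hcb, hlu, hμu, hA, hB]
      module
    have hzero : cu = 0 ∨ ca = 0 ∨ cb = 0 := by
      rcases le_total (min cu ca) cb with h | h
      · rw [min_eq_left h] at hfv
        rcases le_total cu ca with h' | h'
        · left; rw [min_eq_left h'] at hfv; exact hfv
        · right; left; rw [min_eq_right h'] at hfv; exact hfv
      · right; right; rw [min_eq_right h] at hfv; exact hfv
    rcases hzero with h0 | h0 | h0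
    · have hpvw : p ∈ segment ℝ v w := by
        refine ⟨ca, cb, hca0, hcb0, by linarith, ?_⟩
        rw [hprep, h0, zero_smul, zero_add]
      exact Set.eq_empty_iff_forall_notMem.mp hseg2 p ⟨hpxy, hpvw⟩
    · have hpuw : p ∈ segment ℝ u w := by
        refine ⟨cu, cb, hcu0, hcb0, by linarith, ?_⟩
        rw [hprep, h0, zero_smul, add_zero]
      exact Set.eq_empty_iff_forall_notMem.mp hseg4 p ⟨hpxy, hpuw⟩
    · have hpuv : p ∈ segment ℝ u v := by
        refine ⟨cu, ca, hcu0, hca0, by linarith, ?_⟩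
        rw [hprep, h0, zero_smul, add_zero]
      exact Set.eq_empty_iff_forall_notMem.mp hseg3 p ⟨hpxy, hpuv⟩
  · -- the spoke u-x crosses segment v w
    have habpos : 0 < α + β := by linarith
    set c0 := 1 / (α + β) with hc0
    have hc0pos : 0 < c0 := by rw [hc0]; positivity
    have hc0le : c0 ≤ 1 := by
      rw [hc0]
      rw [div_le_one habpos]
      exact hcase
    have hsum : α * c0 + β * c0 = 1 := by
      rw [hc0]; field_simp
    set q := (α * c0) • v + (β * c0) • w with hqdef
    have hqvw : q ∈ segment ℝ v w :=
      ⟨α * c0, β * c0, by positivity, by positivity, hsum, rfl⟩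
    have hqux : q ∈ segment ℝ u x := by
      refine ⟨1 - c0, c0, by linarith, le_of_lt hc0pos, by ring, ?_⟩
      rw [hx, hqdef, hA, hB]
      linear_combination (norm := module) hsum.symm • u
    exact Set.eq_empty_iff_forall_notMem.mp hseg1 q ⟨hqux, hqvw⟩


def ptsL (u n1 n2 p1 p2 p3 : ℝ × ℝ) : List (ℝ × ℝ) := [u, n1, n2, p1, p2, p3]

def edgsL (u n1 n2 p1 p2 p3 : ℝ × ℝ) : List ((ℝ × ℝ) × (ℝ × ℝ)) :=
  [(u,n1),(u,n2),(u,p1),(u,p2),(u,p3),(n1,p1),(n1,p2),(n1,p3),(n2,p1),(n2,p2),(n2,p3)]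

def Bundle (u n1 n2 p1 p2 p3 : ℝ × ℝ) : Prop :=
  List.Pairwise (· ≠ ·) (ptsL u n1 n2 p1 p2 p3) ∧
  (∀ ed ∈ edgsL u n1 n2 p1 p2 p3, ∀ z ∈ ptsL u n1 n2 p1 p2 p3,
      z ≠ ed.1 → z ≠ ed.2 → z ∉ openSegment ℝ ed.1 ed.2) ∧
  (∀ ed ∈ edgsL u n1 n2 p1 p2 p3, ∀ fd ∈ edgsL u n1 n2 p1 p2 p3,
      ed.1 ≠ fd.1 → ed.1 ≠ fd.2 → ed.2 ≠ fd.1 → ed.2 ≠ fd.2 →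
      segment ℝ ed.1 ed.2 ∩ segment ℝ fd.1 fd.2 = ∅)


lemma base_mem_pts {u n1 n2 p1 p2 p3 : ℝ × ℝ} {z : ℝ × ℝ}
    (hz : z ∈ [n1, n2, p1, p2, p3]) : z ∈ ptsL u n1 n2 p1 p2 p3 := by
  simp only [List.mem_cons, List.not_mem_nil, or_false] at hz
  simp only [ptsL, List.mem_cons, List.not_mem_nil, or_false]
  tauto

lemma spoke_mem_edgs {u n1 n2 p1 p2 p3 : ℝ × ℝ} {z : ℝ × ℝ}
    (hz : z ∈ [n1, n2, p1, p2, p3]) : (u, z) ∈ edgsL u n1 n2 p1 p2 p3 := by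
  simp only [List.mem_cons, List.not_mem_nil, or_false] at hz
  rcases hz with rfl | rfl | rfl | rfl | rfl <;> simp [edgsL]

lemma base_ne_u {u n1 n2 p1 p2 p3 : ℝ × ℝ} (hB : Bundle u n1 n2 p1 p2 p3) {z : ℝ × ℝ}
    (hz : z ∈ [n1, n2, p1, p2, p3]) : z ≠ u := by
  have h := hB.1
  simp [ptsL, List.pairwise_cons] at h
  simp only [List.mem_cons, List.not_mem_nil, or_false] at hz
  obtain ⟨⟨h01, h02, h03, h04, h05⟩, -⟩ := h
  rcases hz with rfl | rfl | rfl | rfl | rfl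
  · exact Ne.symm h01
  · exact Ne.symm h02
  · exact Ne.symm h03
  · exact Ne.symm h04
  · exact Ne.symm h05

/-- No two base directions are positively parallel. -/
lemma npp {u n1 n2 p1 p2 p3 : ℝ × ℝ} (hB : Bundle u n1 n2 p1 p2 p3) :
    ∀ z ∈ [n1, n2, p1, p2, p3], ∀ z' ∈ [n1, n2, p1, p2, p3], z ≠ z' →
      ∀ c : ℝ, 0 < c → z' - u ≠ c • (z - u) := by
  intro z hz z' hz' hne c hc heq
  have hzu : z ≠ u := base_ne_u hB hz
  have hz'u : z' ≠ u := base_ne_u hB hz'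
  rcases lt_trichotomy c 1 with h1 | h1 | h1
  · refine hB.2.1 (u, z) (spoke_mem_edgs hz) z' (base_mem_pts hz') hz'u (Ne.symm hne) ?_
    exact ⟨1 - c, c, by linarith, hc, by ring,
      by linear_combination (norm := module) -heq⟩
  · rw [h1, one_smul] at heq
    exact hne (sub_left_inj.mp heq).symm
  · refine hB.2.1 (u, z') (spoke_mem_edgs hz') z (base_mem_pts hz) hzu hne ?_
    have hcne : c ≠ 0 := by linarith
    have hzz : (1/c) • (z' - u) = z - u := by
      rw [heq, smul_smul, one_div, inv_mul_cancel₀ hcne, one_smul]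
    refine ⟨1 - 1/c, 1/c, by rw [sub_pos, div_lt_one (by linarith)]; linarith,
      by positivity, by ring, ?_⟩
    linear_combination (norm := module) hzz

/-- base edges are not collinear with the apex. -/
lemma dtne {u n1 n2 p1 p2 p3 : ℝ × ℝ} (hB : Bundle u n1 n2 p1 p2 p3) :
    ∀ n ∈ [n1, n2], ∀ p ∈ [p1, p2, p3], Dt (n - u) (p - u) ≠ 0 := by
  intro n hn p hp h0
  have hn5 : n ∈ [n1, n2, p1, p2, p3] := by
    simp only [List.mem_cons, List.not_mem_nil, or_false] at hn ⊢; tauto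
  have hp5 : p ∈ [n1, n2, p1, p2, p3] := by
    simp only [List.mem_cons, List.not_mem_nil, or_false] at hp ⊢; tauto
  have hnu : n ≠ u := base_ne_u hB hn5
  have hpu : p ≠ u := base_ne_u hB hp5
  have hnp' : n ≠ p := by
    have h := hB.1
    simp [ptsL, List.pairwise_cons] at h
    obtain ⟨-, ⟨h12, h13, h14, h15⟩, ⟨h23, h24, h25⟩, -⟩ := h
    simp only [List.mem_cons, List.not_mem_nil, or_false] at hn hp
    rcases hn with rfl | rfl <;> rcases hp with rfl | rfl | rfl <;> assumption
  have hedge : (n, p) ∈ edgsL u n1 n2 p1 p2 p3 := by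
    simp only [List.mem_cons, List.not_mem_nil, or_false] at hn hp
    rcases hn with rfl | rfl <;> rcases hp with rfl | rfl | rfl <;> simp [edgsL]
  have hA0 : n - u ≠ 0 := sub_ne_zero.mpr hnu
  obtain ⟨c, hc⟩ := par_of_dt_eq_zero h0 hA0
  have hc0 : c ≠ 0 := by
    intro h
    rw [h, zero_smul, sub_eq_zero] at hc
    exact hpu hc
  have hcneg : c < 0 := by
    rcases lt_trichotomy c 0 with h | h | h
    · exact h
    · exact absurd h hc0
    · exact absurd hc (npp hB n hn5 p hp5 hnp' c h)
  have h1c : (0:ℝ) < 1 - c := by linarith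
  have h1c' : (1:ℝ) - c ≠ 0 := ne_of_gt h1c
  refine hB.2.1 (n, p) hedge u (by simp [ptsL]) (Ne.symm hnu) (Ne.symm hpu) ?_
  have ht : (1/(1-c)) * (1-c) = 1 := by field_simp
  refine ⟨-c / (1 - c), 1 / (1 - c), div_pos (by linarith) h1c, by positivity,
    by field_simp; ring, ?_⟩
  linear_combination (norm := module) ((1/(1-c)) : ℝ) • hc + ht • u

/-- two directions strictly on the same side of line(A): one is in the cone of (A, other). -/
lemma cone_or (A E F : ℝ × ℝ) (hAE : Dt A E ≠ 0) (hAF : Dt A F ≠ 0)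
    (hss : 0 < Dt A E * Dt A F) (hnp : ∀ c : ℝ, 0 < c → F ≠ c • E) :
    InC A F E ∨ InC A E F := by
  have hE0 : E ≠ 0 := by
    intro h; rw [h, Dt_zero_right] at hAE; exact hAE rfl
  have hEF : Dt E F ≠ 0 := by
    intro h
    obtain ⟨c, hc⟩ := par_of_dt_eq_zero h hE0
    have hc' : Dt A F = c * Dt A E := by
      rw [hc]
      simp only [Dt, Prod.smul_fst, Prod.smul_snd, smul_eq_mul]; ring
    have hcpos : 0 < c := by
      rw [hc'] at hss
      by_contra hcon
      push_neg at hcon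
      nlinarith [mul_nonneg (neg_nonneg.mpr hcon) (sq_nonneg (Dt A E))]
    exact hnp c hcpos hc
  rcases lt_trichotomy (Dt E F * Dt A F) 0 with h | h | h
  · right
    refine ⟨by nlinarith, ?_⟩
    have hFE : Dt F E = - Dt E F := by simp only [Dt]; ring
    rw [hFE]
    nlinarith [mul_neg_of_neg_of_pos h hss, sq_nonneg (Dt A F), sq_nonneg (Dt A E)]
  · rcases mul_eq_zero.mp h with h' | h'
    · exact absurd h' hEF
    · exact absurd h' hAF
  · left
    exact ⟨hss, h⟩

lemma ph3 (x y z : ℝ) (hx : x ≠ 0) (hy : y ≠ 0) (hz : z ≠ 0) :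
    0 < x * y ∨ 0 < x * z ∨ 0 < y * z := by
  rcases hx.lt_or_gt with h1 | h1 <;> rcases hy.lt_or_gt with h2 | h2 <;>
    rcases hz.lt_or_gt with h3 | h3
  · exact Or.inl (mul_pos_of_neg_of_neg h1 h2)
  · exact Or.inl (mul_pos_of_neg_of_neg h1 h2)
  · exact Or.inr (Or.inl (mul_pos_of_neg_of_neg h1 h3))
  · exact Or.inr (Or.inr (mul_pos h2 h3))
  · exact Or.inr (Or.inr (mul_pos_of_neg_of_neg h2 h3))
  · exact Or.inr (Or.inl (mul_pos h1 h3))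
  · exact Or.inl (mul_pos h1 h2)
  · exact Or.inl (mul_pos h1 h2)

lemma bundle_swap12 {u n1 n2 p1 p2 p3 : ℝ × ℝ} (hB : Bundle u n1 n2 p1 p2 p3) :
    Bundle u n1 n2 p2 p1 p3 := by
  obtain ⟨h1, h2, h3⟩ := hB
  have hpts : ∀ z ∈ ptsL u n1 n2 p2 p1 p3, z ∈ ptsL u n1 n2 p1 p2 p3 := by
    intro z hz; simp [ptsL] at hz ⊢; tauto
  have hedgs : ∀ zz ∈ edgsL u n1 n2 p2 p1 p3, zz ∈ edgsL u n1 n2 p1 p2 p3 := by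
    intro zz hzz; simp [edgsL] at hzz ⊢; tauto
  refine ⟨?_, ?_, ?_⟩
  · have hperm : List.Perm (ptsL u n1 n2 p2 p1 p3) (ptsL u n1 n2 p1 p2 p3) := by
      simp only [ptsL]
      exact List.Perm.cons u (List.Perm.cons n1 (List.Perm.cons n2 (List.Perm.swap p1 p2 [p3])))
    exact (hperm.pairwise_iff fun h => h.symm).mpr h1
  · intro ed hed z hz hz1 hz2
    exact h2 ed (hedgs ed hed) z (hpts z hz) hz1 hz2
  · intro ed hed fd hfd q1 q2 q3 q4
    exact h3 ed (hedgs ed hed) fd (hedgs fd hfd) q1 q2 q3 q4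

lemma bundle_swap23 {u n1 n2 p1 p2 p3 : ℝ × ℝ} (hB : Bundle u n1 n2 p1 p2 p3) :
    Bundle u n1 n2 p1 p3 p2 := by
  obtain ⟨h1, h2, h3⟩ := hB
  have hpts : ∀ z ∈ ptsL u n1 n2 p1 p3 p2, z ∈ ptsL u n1 n2 p1 p2 p3 := by
    intro z hz; simp [ptsL] at hz ⊢; tauto
  have hedgs : ∀ zz ∈ edgsL u n1 n2 p1 p3 p2, zz ∈ edgsL u n1 n2 p1 p2 p3 := by
    intro zz hzz; simp [edgsL] at hzz ⊢; tauto
  refine ⟨?_, ?_, ?_⟩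
  · have hperm : List.Perm (ptsL u n1 n2 p1 p3 p2) (ptsL u n1 n2 p1 p2 p3) := by
      simp only [ptsL]
      exact List.Perm.cons u (List.Perm.cons n1 (List.Perm.cons n2 (List.Perm.cons p1
        (List.Perm.swap p2 p3 []))))
    exact (hperm.pairwise_iff fun h => h.symm).mpr h1
  · intro ed hed z hz hz1 hz2
    exact h2 ed (hedgs ed hed) z (hpts z hz) hz1 hz2
  · intro ed hed fd hfd q1 q2 q3 q4
    exact h3 ed (hedgs ed hed) fd (hedgs fd hfd) q1 q2 q3 q4

/-- convenience: all pairwise distinctness facts. -/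
lemma bundle_ne {u n1 n2 p1 p2 p3 : ℝ × ℝ} (hB : Bundle u n1 n2 p1 p2 p3) :
    (u ≠ n1 ∧ u ≠ n2 ∧ u ≠ p1 ∧ u ≠ p2 ∧ u ≠ p3) ∧
    (n1 ≠ n2 ∧ n1 ≠ p1 ∧ n1 ≠ p2 ∧ n1 ≠ p3) ∧
    (n2 ≠ p1 ∧ n2 ≠ p2 ∧ n2 ≠ p3) ∧ (p1 ≠ p2 ∧ p1 ≠ p3) ∧ p2 ≠ p3 := by
  have h := hB.1
  simp [ptsL, List.pairwise_cons] at h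
  obtain ⟨⟨h01, h02, h03, h04, h05⟩, ⟨h12, h13, h14, h15⟩, ⟨h23, h24, h25⟩, ⟨h34, h35⟩, h45⟩ := h
  exact ⟨⟨h01, h02, h03, h04, h05⟩, ⟨h12, h13, h14, h15⟩, ⟨h23, h24, h25⟩, ⟨h34, h35⟩, h45⟩

/-- Application of `fin` with the inner point being a base (p) point. -/
lemma coneA {u n1 n2 pa pb pc : ℝ × ℝ} (hB : Bundle u n1 n2 pa pb pc)
    (h1 : InC (n1 - u) (pa - u) (pb - u)) (h2 : ¬ InC (n1 - u) (pa - u) (n2 - u)) :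
    False := by
  obtain ⟨⟨h01, h02, h03, h04, h05⟩, ⟨h12, h13, h14, h15⟩, ⟨h23, h24, h25⟩, ⟨h34, h35⟩, h45⟩ :=
    bundle_ne hB
  refine fin u n1 pa pb n2 h1 h2 (Ne.symm h02) ?_ ?_ ?_ ?_ ?_ ?_
  · exact npp hB n1 (by simp) n2 (by simp) h12
  · exact npp hB pa (by simp) n2 (by simp) (Ne.symm h23)
  · exact hB.2.2 (u, pb) (by simp [edgsL]) (n1, pa) (by simp [edgsL]) h01 h03
      (Ne.symm h14) (Ne.symm h34)
  · have := hB.2.2 (n2, pb) (by simp [edgsL]) (n1, pa) (by simp [edgsL]) (Ne.symm h12)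
      h23 (Ne.symm h14) (Ne.symm h34)
    rwa [segment_symm] at this
  · have := hB.2.2 (n2, pb) (by simp [edgsL]) (u, n1) (by simp [edgsL]) (Ne.symm h02)
      (Ne.symm h12) (Ne.symm h04) (Ne.symm h14)
    rwa [segment_symm] at this
  · have := hB.2.2 (n2, pb) (by simp [edgsL]) (u, pa) (by simp [edgsL]) (Ne.symm h02)
      h23 (Ne.symm h04) (Ne.symm h34)
    rwa [segment_symm] at this

/-- Application of `fin` with the inner point being `n2`. -/
lemma coneB {u n1 n2 pa pb pc : ℝ × ℝ} (hB : Bundle u n1 n2 pa pb pc)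
    (h1 : InC (n1 - u) (pa - u) (n2 - u)) (h2 : ¬ InC (n1 - u) (pa - u) (pb - u)) :
    False := by
  obtain ⟨⟨h01, h02, h03, h04, h05⟩, ⟨h12, h13, h14, h15⟩, ⟨h23, h24, h25⟩, ⟨h34, h35⟩, h45⟩ :=
    bundle_ne hB
  refine fin u n1 pa n2 pb h1 h2 (Ne.symm h04) ?_ ?_ ?_ ?_ ?_ ?_
  · exact npp hB n1 (by simp) pb (by simp) h14
  · exact npp hB pa (by simp) pb (by simp) h34
  · exact hB.2.2 (u, n2) (by simp [edgsL]) (n1, pa) (by simp [edgsL]) h01 h03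
      (Ne.symm h12) h23
  · exact hB.2.2 (n2, pb) (by simp [edgsL]) (n1, pa) (by simp [edgsL]) (Ne.symm h12)
      h23 (Ne.symm h14) (Ne.symm h34)
  · exact hB.2.2 (n2, pb) (by simp [edgsL]) (u, n1) (by simp [edgsL]) (Ne.symm h02)
      (Ne.symm h12) (Ne.symm h04) (Ne.symm h14)
  · exact hB.2.2 (n2, pb) (by simp [edgsL]) (u, pa) (by simp [edgsL]) (Ne.symm h02)
      h23 (Ne.symm h04) (Ne.symm h34)

lemma core {u n1 n2 pk pj pl : ℝ × ℝ} (hB : Bundle u n1 n2 pk pj pl)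
    (X1 : InC (n1 - u) (pk - u) (pj - u)) : False := by
  by_cases hb : InC (n1 - u) (pk - u) (n2 - u)
  · by_cases hbj : InC (n1 - u) (pj - u) (n2 - u)
    · exact coneB (bundle_swap12 hB) hbj (fun h => mutual_exclusion X1 h)
    · by_cases hl1 : InC (n1 - u) (pk - u) (pl - u)
      · by_cases hl2 : InC (n1 - u) (pj - u) (pl - u)
        · exact coneA (bundle_swap23 (bundle_swap12 hB)) hl2 hbj
        · by_cases hl3 : InC (n1 - u) (pl - u) (n2 - u)
          · exact coneB (bundle_swap12 (bundle_swap23 hB)) hl3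
              (fun h => mutual_exclusion hl1 h)
          · have hAJ : Dt (n1 - u) (pj - u) ≠ 0 := dtne hB n1 (by simp) pj (by simp)
            have hAL : Dt (n1 - u) (pl - u) ≠ 0 := dtne hB n1 (by simp) pl (by simp)
            have hss : 0 < Dt (n1 - u) (pj - u) * Dt (n1 - u) (pl - u) := by
              nlinarith [mul_pos X1.1 hl1.1, sq_nonneg (Dt (n1 - u) (pk - u)),
                sq_nonneg (Dt (n1 - u) (pj - u) * Dt (n1 - u) (pl - u))]
            have hjl : pj ≠ pl := (bundle_ne hB).2.2.2.2
            rcases cone_or (n1 - u) (pj - u) (pl - u) hAJ hAL hss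
                (npp hB pj (by simp) pl (by simp) hjl) with hX | hX
            · exact coneA (bundle_swap12 (bundle_swap23 (bundle_swap12 hB))) hX hl3
            · exact absurd hX hl2
      · exact coneB (bundle_swap23 hB) hb hl1
  · exact coneA hB X1 hb

theorem geo {u n1 n2 p1 p2 p3 : ℝ × ℝ} (hB : Bundle u n1 n2 p1 p2 p3) : False := by
  have hd1 : Dt (n1 - u) (p1 - u) ≠ 0 := dtne hB n1 (by simp) p1 (by simp)
  have hd2 : Dt (n1 - u) (p2 - u) ≠ 0 := dtne hB n1 (by simp) p2 (by simp)
  have hd3 : Dt (n1 - u) (p3 - u) ≠ 0 := dtne hB n1 (by simp) p3 (by simp)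
  obtain ⟨-, -, -, ⟨h34, h35⟩, h45⟩ := bundle_ne hB
  rcases ph3 _ _ _ hd1 hd2 hd3 with h | h | h
  · rcases cone_or (n1 - u) (p1 - u) (p2 - u) hd1 hd2 h
        (npp hB p1 (by simp) p2 (by simp) h34) with hX | hX
    · exact core (bundle_swap12 hB) hX
    · exact core hB hX
  · rcases cone_or (n1 - u) (p1 - u) (p3 - u) hd1 hd3 h
        (npp hB p1 (by simp) p3 (by simp) h35) with hX | hX
    · exact core (bundle_swap12 (bundle_swap23 hB)) hX
    · exact core (bundle_swap23 hB) hX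
  · rcases cone_or (n1 - u) (p2 - u) (p3 - u) hd2 hd3 h
        (npp hB p2 (by simp) p3 (by simp) h45) with hX | hX
    · exact core (bundle_swap12 (bundle_swap23 (bundle_swap12 hB))) hX
    · exact core (bundle_swap23 (bundle_swap12 hB)) hX



lemma adj_q_a (i : Fin 4) (j : Fin 2) (k : Fin 4) : GraphG.Adj (GVert.q i j) (GVert.a k) := by
  rw [GraphG, SimpleGraph.fromRel_adj]
  exact ⟨fun h => GVert.noConfusion h, Or.inl trivial⟩

lemma adj_q_b (i : Fin 4) (j : Fin 2) (k : Fin 4) : GraphG.Adj (GVert.q i j) (GVert.b k) := by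
  rw [GraphG, SimpleGraph.fromRel_adj]
  exact ⟨fun h => GVert.noConfusion h, Or.inl trivial⟩

lemma adj_q_c (i : Fin 4) (j : Fin 2) (k : Fin 4) : GraphG.Adj (GVert.q i j) (GVert.c k) := by
  rw [GraphG, SimpleGraph.fromRel_adj]
  exact ⟨fun h => GVert.noConfusion h, Or.inl trivial⟩

lemma adj_a_succ (k : Fin 4) : GraphG.Adj (GVert.a k) (GVert.a (k+1)) := by
  rw [GraphG, SimpleGraph.fromRel_adj]
  refine ⟨?_, Or.inl rfl⟩
  fin_cases k <;> decide

lemma adj_a_pred (k : Fin 4) : GraphG.Adj (GVert.a k) (GVert.a (k+3)) := by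
  rw [GraphG, SimpleGraph.fromRel_adj]
  refine ⟨?_, Or.inr ?_⟩
  · fin_cases k <;> decide
  · show k = k + 3 + 1
    fin_cases k <;> decide

lemma adj_b_succ (k : Fin 4) : GraphG.Adj (GVert.b k) (GVert.b (k+1)) := by
  rw [GraphG, SimpleGraph.fromRel_adj]
  refine ⟨?_, Or.inl rfl⟩
  fin_cases k <;> decide

lemma adj_b_pred (k : Fin 4) : GraphG.Adj (GVert.b k) (GVert.b (k+3)) := by
  rw [GraphG, SimpleGraph.fromRel_adj]
  refine ⟨?_, Or.inr ?_⟩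
  · fin_cases k <;> decide
  · show k = k + 3 + 1
    fin_cases k <;> decide

lemma adj_c_succ (k : Fin 4) : GraphG.Adj (GVert.c k) (GVert.c (k+1)) := by
  rw [GraphG, SimpleGraph.fromRel_adj]
  refine ⟨?_, Or.inl rfl⟩
  fin_cases k <;> decide

lemma adj_c_pred (k : Fin 4) : GraphG.Adj (GVert.c k) (GVert.c (k+3)) := by
  rw [GraphG, SimpleGraph.fromRel_adj]
  refine ⟨?_, Or.inr ?_⟩
  · fin_cases k <;> decide
  · show k = k + 3 + 1
    fin_cases k <;> decide

lemma bundle_of_frame (S : Set GVert) (D : GVert → ℝ × ℝ)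
    (hf : IsPlanarSLFrame GraphG S D) (U N1 N2 Q1 Q2 Q3 : GVert)
    (hmem : ∀ v ∈ [U, N1, N2, Q1, Q2, Q3], v ∈ S)
    (hpair : List.Pairwise (· ≠ ·) [U, N1, N2, Q1, Q2, Q3])
    (hadj : ∀ pe ∈ [(U,N1),(U,N2),(U,Q1),(U,Q2),(U,Q3),(N1,Q1),(N1,Q2),(N1,Q3),
        (N2,Q1),(N2,Q2),(N2,Q3)], GraphG.Adj pe.1 pe.2) :
    Bundle (D U) (D N1) (D N2) (D Q1) (D Q2) (D Q3) := by
  obtain ⟨hinj, hii, hiii⟩ := hf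
  have hVE1 : ∀ pe ∈ [(U,N1),(U,N2),(U,Q1),(U,Q2),(U,Q3),(N1,Q1),(N1,Q2),(N1,Q3),
      (N2,Q1),(N2,Q2),(N2,Q3)], pe.1 ∈ S ∧ pe.2 ∈ S := by
    intro pe hpe
    fin_cases hpe <;> exact ⟨hmem _ (by simp), hmem _ (by simp)⟩
  refine ⟨?_, ?_, ?_⟩
  · rw [show ptsL (D U) (D N1) (D N2) (D Q1) (D Q2) (D Q3)
        = List.map D [U, N1, N2, Q1, Q2, Q3] from rfl]
    rw [List.pairwise_map]
    refine hpair.imp_of_mem ?_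
    intro a b ha hb hne
    exact fun h => hne (hinj (hmem a ha) (hmem b hb) h)
  · intro ed hed z hz hz1 hz2
    rw [show edgsL (D U) (D N1) (D N2) (D Q1) (D Q2) (D Q3)
        = List.map (Prod.map D D) [(U,N1),(U,N2),(U,Q1),(U,Q2),(U,Q3),(N1,Q1),(N1,Q2),
            (N1,Q3),(N2,Q1),(N2,Q2),(N2,Q3)] from rfl] at hed
    obtain ⟨pe, hpe, rfl⟩ := List.mem_map.mp hed
    rw [show ptsL (D U) (D N1) (D N2) (D Q1) (D Q2) (D Q3)
        = List.map D [U, N1, N2, Q1, Q2, Q3] from rfl] at hz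
    obtain ⟨v0, hv0, rfl⟩ := List.mem_map.mp hz
    exact hii pe.1 pe.2 v0 (hadj pe hpe) (hVE1 pe hpe).1 (hVE1 pe hpe).2 (hmem v0 hv0)
      (fun h => hz1 (congrArg D h)) (fun h => hz2 (congrArg D h))
  · intro ed hed fd hfd h1 h2 h3 h4
    rw [show edgsL (D U) (D N1) (D N2) (D Q1) (D Q2) (D Q3)
        = List.map (Prod.map D D) [(U,N1),(U,N2),(U,Q1),(U,Q2),(U,Q3),(N1,Q1),(N1,Q2),
            (N1,Q3),(N2,Q1),(N2,Q2),(N2,Q3)] from rfl] at hed hfd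
    obtain ⟨pe, hpe, rfl⟩ := List.mem_map.mp hed
    obtain ⟨pf, hpf, rfl⟩ := List.mem_map.mp hfd
    apply Set.eq_empty_iff_forall_notMem.mpr
    intro p hp
    have hns : ¬((pe.1 = pf.1 ∧ pe.2 = pf.2) ∨ (pe.1 = pf.2 ∧ pe.2 = pf.1)) := by
      rintro (⟨ha, hb⟩ | ⟨ha, hb⟩)
      · exact h1 (congrArg D ha)
      · exact h2 (congrArg D ha)
    obtain ⟨z, hz1, hz2, hz3⟩ := hiii pe.1 pe.2 pf.1 pf.2 (hadj pe hpe) (hadj pf hpf)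
      (hVE1 pe hpe).1 (hVE1 pe hpe).2 (hVE1 pf hpf).1 (hVE1 pf hpf).2 hns p hp
    rcases hz1 with rfl | rfl <;> rcases hz2 with h | h
    · exact h1 (congrArg D h)
    · exact h2 (congrArg D h)
    · exact h3 (congrArg D h)
    · exact h4 (congrArg D h)

lemma main_from_cycle (len : ℕ) (s e : GVert → ℕ) (D : GVert → ℝ × ℝ)
    (hSP : IsGeomStoryplan GraphG len s e D) (u n1 n2 w : GVert)
    (hadj1 : GraphG.Adj u n1) (hadj2 : GraphG.Adj u n2)
    (hqu : ∀ i j, GraphG.Adj u (GVert.q i j))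
    (hqn1 : ∀ i j, GraphG.Adj n1 (GVert.q i j))
    (hqn2 : ∀ i j, GraphG.Adj n2 (GVert.q i j))
    (hqw : ∀ i j, GraphG.Adj w (GVert.q i j))
    (hpair : List.Pairwise (· ≠ ·) [u, n1, n2, GVert.q 0 0, GVert.q 0 1, GVert.q 1 0])
    (hmin1 : e u ≤ e n1) (hmin2 : e u ≤ e n2)
    (hsw : e u < s w) : False := by
  obtain ⟨hlen, hv, hco, hfr⟩ := hSP
  have hframe := hfr (e u) (le_trans (hv u).1 (hv u).2.1) (hv u).2.2
  have hq : ∀ (i : Fin 4) (j : Fin 2), s (GVert.q i j) ≤ e u ∧ e u ≤ e (GVert.q i j) := by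
    intro i j
    obtain ⟨t1, ha1, ha2, ha3, ha4⟩ := hco u (GVert.q i j) (hqu i j)
    obtain ⟨t2, hb1, hb2, hb3, hb4⟩ := hco w (GVert.q i j) (hqw i j)
    exact ⟨le_trans ha3 ha2, le_trans (le_of_lt (lt_of_lt_of_le hsw hb1)) hb4⟩
  have hmemS : ∀ v ∈ [u, n1, n2, GVert.q 0 0, GVert.q 0 1, GVert.q 1 0],
      v ∈ {v | s v ≤ e u ∧ e u ≤ e v} := by
    intro v hv'
    simp only [List.mem_cons, List.not_mem_nil, or_false] at hv'
    rcases hv' with rfl | rfl | rfl | rfl | rfl | rfl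
    · exact ⟨(hv v).2.1, le_refl _⟩
    · obtain ⟨t1, ha1, ha2, ha3, ha4⟩ := hco u v hadj1
      exact ⟨le_trans ha3 ha2, hmin1⟩
    · obtain ⟨t1, ha1, ha2, ha3, ha4⟩ := hco u v hadj2
      exact ⟨le_trans ha3 ha2, hmin2⟩
    · exact hq 0 0
    · exact hq 0 1
    · exact hq 1 0
  have hadjL : ∀ pe ∈ [(u,n1),(u,n2),(u,GVert.q 0 0),(u,GVert.q 0 1),(u,GVert.q 1 0),
      (n1,GVert.q 0 0),(n1,GVert.q 0 1),(n1,GVert.q 1 0),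
      (n2,GVert.q 0 0),(n2,GVert.q 0 1),(n2,GVert.q 1 0)], GraphG.Adj pe.1 pe.2 := by
    intro pe hpe
    fin_cases hpe
    · exact hadj1
    · exact hadj2
    · exact hqu _ _
    · exact hqu _ _
    · exact hqu _ _
    · exact hqn1 _ _
    · exact hqn1 _ _
    · exact hqn1 _ _
    · exact hqn2 _ _
    · exact hqn2 _ _
    · exact hqn2 _ _
  exact geo (bundle_of_frame _ D hframe u n1 n2 (GVert.q 0 0) (GVert.q 0 1) (GVert.q 1 0)
    hmemS hpair hadjL)

def cycF : Finset GVert :=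
  {GVert.a 0, GVert.a 1, GVert.a 2, GVert.a 3, GVert.b 0, GVert.b 1, GVert.b 2, GVert.b 3,
   GVert.c 0, GVert.c 1, GVert.c 2, GVert.c 3}

lemma finish_a (len : ℕ) (s e : GVert → ℕ) (D : GVert → ℝ × ℝ)
    (hSP : IsGeomStoryplan GraphG len s e D) (k : Fin 4) (w : GVert)
    (hwq : ∀ i j, GraphG.Adj w (GVert.q i j))
    (hmin1 : e (GVert.a k) ≤ e (GVert.a (k+1))) (hmin2 : e (GVert.a k) ≤ e (GVert.a (k+3)))
    (hsw : e (GVert.a k) < s w) : False :=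
  main_from_cycle len s e D hSP (GVert.a k) (GVert.a (k+1)) (GVert.a (k+3)) w
    (adj_a_succ k) (adj_a_pred k)
    (fun i j => (adj_q_a i j k).symm) (fun i j => (adj_q_a i j (k+1)).symm)
    (fun i j => (adj_q_a i j (k+3)).symm) hwq (by fin_cases k <;> decide) hmin1 hmin2 hsw

lemma finish_b (len : ℕ) (s e : GVert → ℕ) (D : GVert → ℝ × ℝ)
    (hSP : IsGeomStoryplan GraphG len s e D) (k : Fin 4) (w : GVert)
    (hwq : ∀ i j, GraphG.Adj w (GVert.q i j))
    (hmin1 : e (GVert.b k) ≤ e (GVert.b (k+1))) (hmin2 : e (GVert.b k) ≤ e (GVert.b (k+3)))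
    (hsw : e (GVert.b k) < s w) : False :=
  main_from_cycle len s e D hSP (GVert.b k) (GVert.b (k+1)) (GVert.b (k+3)) w
    (adj_b_succ k) (adj_b_pred k)
    (fun i j => (adj_q_b i j k).symm) (fun i j => (adj_q_b i j (k+1)).symm)
    (fun i j => (adj_q_b i j (k+3)).symm) hwq (by fin_cases k <;> decide) hmin1 hmin2 hsw

lemma finish_c (len : ℕ) (s e : GVert → ℕ) (D : GVert → ℝ × ℝ)
    (hSP : IsGeomStoryplan GraphG len s e D) (k : Fin 4) (w : GVert)
    (hwq : ∀ i j, GraphG.Adj w (GVert.q i j))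
    (hmin1 : e (GVert.c k) ≤ e (GVert.c (k+1))) (hmin2 : e (GVert.c k) ≤ e (GVert.c (k+3)))
    (hsw : e (GVert.c k) < s w) : False :=
  main_from_cycle len s e D hSP (GVert.c k) (GVert.c (k+1)) (GVert.c (k+3)) w
    (adj_c_succ k) (adj_c_pred k)
    (fun i j => (adj_q_c i j k).symm) (fun i j => (adj_q_c i j (k+1)).symm)
    (fun i j => (adj_q_c i j (k+3)).symm) hwq (by fin_cases k <;> decide) hmin1 hmin2 hsw

end Story

/-- In every planar geometric storyplan of `G`, there is a time
step at which all twelve cycle vertices are simultaneously visible. -/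
theorem all_cycles_cooccur
    (len : ℕ) (s e : GVert → ℕ) (D : GVert → ℝ × ℝ)
    (hSP : IsGeomStoryplan GraphG len s e D) :
    ∃ t, CyclesVisible s e t := by
  by_contra hno
  push_neg at hno
  obtain ⟨u, huF, hmin⟩ := Story.cycF.exists_min_image e ⟨GVert.a 0, by decide⟩
  have hC := hno (e u)
  simp only [CyclesVisible] at hC
  obtain ⟨k0, hk0⟩ := not_forall.mp hC
  have hFa : ∀ k : Fin 4, GVert.a k ∈ Story.cycF := by intro k; fin_cases k <;> decide
  have hFb : ∀ k : Fin 4, GVert.b k ∈ Story.cycF := by intro k; fin_cases k <;> decide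
  have hFc : ∀ k : Fin 4, GVert.c k ∈ Story.cycF := by intro k; fin_cases k <;> decide
  have hw : ∃ w, (∀ i j, GraphG.Adj w (GVert.q i j)) ∧ w ∈ Story.cycF ∧
      ¬ Visible s e (e u) w := by
    by_cases h1 : Visible s e (e u) (GVert.a k0)
    · by_cases h2 : Visible s e (e u) (GVert.b k0)
      · exact ⟨GVert.c k0, fun i j => (Story.adj_q_c i j k0).symm, hFc k0,
          fun h3 => hk0 ⟨h1, h2, h3⟩⟩
      · exact ⟨GVert.b k0, fun i j => (Story.adj_q_b i j k0).symm, hFb k0, h2⟩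
    · exact ⟨GVert.a k0, fun i j => (Story.adj_q_a i j k0).symm, hFa k0, h1⟩
  obtain ⟨w, hwq, hwF, hwvis⟩ := hw
  have hew : e u ≤ e w := hmin w hwF
  have hsw : e u < s w := by
    rcases Nat.lt_or_ge (e u) (s w) with h | h
    · exact h
    · exact absurd ⟨h, hew⟩ hwvis
  fin_cases huF <;>
    first
      | exact Story.finish_a len s e D hSP _ w hwq (hmin _ (by decide)) (hmin _ (by decide)) hsw
      | exact Story.finish_b len s e D hSP _ w hwq (hmin _ (by decide)) (hmin _ (by decide)) hsw
      | exact Story.finish_c len s e D hSP _ w hwq (hmin _ (by decide)) (hmin _ (by decide)) hsw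
end
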